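/- arXiv:1907.12751 — 2 statements merged into one kernel-verified Lean document; each statement's English description precedes it below -/
import Mathlib

section
/- Let H be a Hopf algebra with bijective antipode over a field k, A a right H-comodule algebra with coinvariants B = A^{co H}, and j: H → A a right H-comodule algebra map. Then h ▷ b := j(h₁) b j(S(h₂)) defines an action of H on B making B an H-module algebra; the smash product B ♯ H, i.e. the H-comodule B ⊗ H (with coaction id ⊗ Δ) equipped with the product (b ⊗ h)(b' ⊗ h') = b (h₁ ▷ b') ⊗ h₂ h', is a right H-comodule algebra; and the map θ: B ♯ H → A, b ⊗ h ↦ b j(h), is an isomorphism of right H-comodule algebras. -/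
set_option maxHeartbeats 1000000
set_option synthInstance.maxHeartbeats 400000


/-!
STATEMENT 1.  Let `H` be a Hopf algebra with bijective antipode over a field `k`, `A` a right
`H`-comodule algebra with coinvariants `B = A^{co H}`, and `j : H → A` a right `H`-comodule
algebra map.  Then `h ▷ b := j(h₁) b j(S(h₂))` defines an action of `H` on `B` making `B` an
`H`-module algebra; the smash product `B ♯ H`, i.e. the `H`-comodule `B ⊗ H` (with coaction
`id ⊗ Δ`) equipped with the product `(b ⊗ h)(b' ⊗ h') = b (h₁ ▷ b') ⊗ h₂ h'`, is a right
`H`-comodule algebra; and the map `θ : B ♯ H → A`, `b ⊗ h ↦ b j(h)`, is an isomorphism of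
right `H`-comodule algebras.

The comodule algebra structure on `B ♯ H` is the one transported along the bijection `θ`;
accordingly the theorem asserts: (a) the action lands in `B` and satisfies the `H`-module
algebra axioms; (b) `θ` is a `k`-linear bijection; (c) the product of `A` pulled back along
`θ` is exactly the smash product `(b ⊗ h)(b' ⊗ h') = b (h₁ ▷ b') ⊗ h₂ h'`; (d) `θ`
intertwines the coaction of `A` with the coaction `id ⊗ Δ` on `B ⊗ H`.
-/

open TensorProduct

namespace QPB

variable (k : Type*) [CommRing k]

/-- A right `H`-comodule algebra structure on the `k`-algebra `A`. -/
structure ComodAlg (H A : Type*) [Ring H] [Ring A] [Bialgebra k H] [Algebra k A] where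
  δ : A →ₐ[k] A ⊗[k] H
  counit_id : (TensorProduct.rid k A).toLinearMap ∘ₗ
      (TensorProduct.map LinearMap.id (Coalgebra.counit (R := k) (A := H))) ∘ₗ δ.toLinearMap
      = LinearMap.id
  coassoc : (TensorProduct.assoc k A H H).toLinearMap ∘ₗ
      (TensorProduct.map δ.toLinearMap LinearMap.id) ∘ₗ δ.toLinearMap
      = (TensorProduct.map LinearMap.id (Coalgebra.comul (R := k) (A := H))) ∘ₗ δ.toLinearMap

variable {k}

/-- The subalgebra of coinvariants `A^{co H} = {a : δ a = a ⊗ 1}`. -/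
def ComodAlg.coinv {H A : Type*} [Ring H] [Ring A] [Bialgebra k H] [Algebra k A]
    (c : ComodAlg k H A) : Subalgebra k A where
  carrier := {a | c.δ a = a ⊗ₜ[k] 1}
  mul_mem' := by
    intro a b ha hb
    simp only [Set.mem_setOf_eq] at *
    rw [map_mul, ha, hb, Algebra.TensorProduct.tmul_mul_tmul, mul_one]
  one_mem' := by
    simp only [Set.mem_setOf_eq, map_one, Algebra.TensorProduct.one_def]
  add_mem' := by
    intro a b ha hb
    simp only [Set.mem_setOf_eq] at *
    rw [map_add, ha, hb, TensorProduct.add_tmul]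
  algebraMap_mem' := by
    intro r
    simp only [Set.mem_setOf_eq, AlgHom.commutes, Algebra.TensorProduct.algebraMap_apply]

variable (k)

/-- A linear map `j : H → A` is a right `H`-comodule map: `δ ∘ j = (j ⊗ id) ∘ Δ`. -/
def IsComodMap {H A : Type*} [Ring H] [Ring A] [Bialgebra k H] [Algebra k A]
    (c : ComodAlg k H A) (j : H →ₗ[k] A) : Prop :=
  c.δ.toLinearMap ∘ₗ j
    = (TensorProduct.map j LinearMap.id) ∘ₗ (Coalgebra.comul (R := k) (A := H))

/-- The linear map `H ⊗ A → A`, `h ⊗ a ↦ j(h₁) a j(S(h₂))` (Sweedler notation),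
built from the algebra map `j : H → A` and the antipode `S` of `H`. -/
noncomputable def adAction {H A : Type*} [Ring H] [Ring A] [HopfAlgebra k H] [Algebra k A]
    (j : H →ₐ[k] A) : H ⊗[k] A →ₗ[k] A :=
  (LinearMap.mul' k A) ∘ₗ (LinearMap.lTensor A (LinearMap.mul' k A)) ∘ₗ
    (TensorProduct.map j.toLinearMap
      (TensorProduct.map LinearMap.id
        (j.toLinearMap ∘ₗ HopfAlgebra.antipode (R := k) (A := H)))) ∘ₗ
    (LinearMap.lTensor H (TensorProduct.comm k H A).toLinearMap) ∘ₗ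
    (TensorProduct.assoc k H H A).toLinearMap ∘ₗ
    (LinearMap.rTensor A (Coalgebra.comul (R := k) (A := H)))

end QPB

open QPB


open TensorProduct Coalgebra LinearMap

namespace QPBAux

variable {k H : Type*} [CommRing k] [Ring H] [Bialgebra k H]

lemma sum_counit_smul {h : H} {ι : Type*} (r : Coalgebra.Repr k h ι) :
    ∑ i ∈ r.index, counit (R := k) (r.left i) • r.right i = h := by
  have := congrArg (TensorProduct.lid k H) (sum_counit_tmul_eq r)
  simp only [map_sum, lid_tmul] at this
  simpa using this

lemma sum_smul_counit {h : H} {ι : Type*} (r : Coalgebra.Repr k h ι) :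
    ∑ i ∈ r.index, counit (R := k) (r.right i) • r.left i = h := by
  have := congrArg (TensorProduct.rid k H) (sum_tmul_counit_eq r)
  simp only [map_sum, rid_tmul] at this
  simpa using this

section patterns

variable {h : H} {ι : Type*} {κ₁ κ₂ : ι → Type*} (r : Coalgebra.Repr k h ι)
  (s : ∀ i, Coalgebra.Repr k (r.left i) (κ₁ i))
  (t : ∀ i, Coalgebra.Repr k (r.right i) (κ₂ i))

/-- P1 (split both) = RC (right comb). -/
lemma P1_eq_RC {μ : ∀ i, κ₂ i → Type*} (v : ∀ i q, Coalgebra.Repr k ((t i).right q) (μ i q)) :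
    ∑ i ∈ r.index, ∑ p ∈ (s i).index, ∑ q ∈ (t i).index,
      (s i).left p ⊗ₜ[k] ((s i).right p ⊗ₜ[k] ((t i).left q ⊗ₜ[k] (t i).right q))
    = ∑ i ∈ r.index, ∑ q ∈ (t i).index, ∑ m ∈ (v i q).index,
      r.left i ⊗ₜ[k] ((t i).left q ⊗ₜ[k] ((v i q).left m ⊗ₜ[k] (v i q).right m)) := by
  have := congrArg (lTensor H (lTensor H (comul (R := k) (A := H))))
    (sum_tmul_tmul_eq r s t)
  simp only [map_sum, lTensor_tmul] at this
  calc ∑ i ∈ r.index, ∑ p ∈ (s i).index, ∑ q ∈ (t i).index,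
      (s i).left p ⊗ₜ[k] ((s i).right p ⊗ₜ[k] ((t i).left q ⊗ₜ[k] (t i).right q))
      = ∑ i ∈ r.index, ∑ p ∈ (s i).index,
        (s i).left p ⊗ₜ[k] ((s i).right p ⊗ₜ[k] comul (R := k) (r.right i)) := by
        refine Finset.sum_congr rfl fun i _ => Finset.sum_congr rfl fun p _ => ?_
        rw [← (t i).eq]
        simp [tmul_sum]
    _ = ∑ i ∈ r.index, ∑ q ∈ (t i).index,
        r.left i ⊗ₜ[k] ((t i).left q ⊗ₜ[k] comul (R := k) ((t i).right q)) := this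
    _ = _ := by
        refine Finset.sum_congr rfl fun i _ => Finset.sum_congr rfl fun q _ => ?_
        rw [← (v i q).eq]
        simp [tmul_sum]

/-- P2 (right, then left of that) = RC. -/
lemma P2_eq_RC {μ₁ μ₂ : ∀ i, κ₂ i → Type*} (u : ∀ i q, Coalgebra.Repr k ((t i).left q) (μ₁ i q))
    (v : ∀ i q, Coalgebra.Repr k ((t i).right q) (μ₂ i q)) :
    ∑ i ∈ r.index, ∑ q ∈ (t i).index, ∑ m ∈ (u i q).index,
      r.left i ⊗ₜ[k] ((u i q).left m ⊗ₜ[k] ((u i q).right m ⊗ₜ[k] (t i).right q))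
    = ∑ i ∈ r.index, ∑ q ∈ (t i).index, ∑ m ∈ (v i q).index,
      r.left i ⊗ₜ[k] ((t i).left q ⊗ₜ[k] ((v i q).left m ⊗ₜ[k] (v i q).right m)) := by
  refine Finset.sum_congr rfl fun i _ => ?_
  have := congrArg (fun z => r.left i ⊗ₜ[k] z) (sum_tmul_tmul_eq (t i) (u i) (v i))
  simpa [tmul_sum] using this

/-- P5 (left, then right of that) = P2. -/
lemma P5_eq_P2 {μ₁ : ∀ i, κ₁ i → Type*} {μ₂ : ∀ i, κ₂ i → Type*}
    (w : ∀ i p, Coalgebra.Repr k ((s i).right p) (μ₁ i p))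
    (u : ∀ i q, Coalgebra.Repr k ((t i).left q) (μ₂ i q)) :
    ∑ i ∈ r.index, ∑ p ∈ (s i).index, ∑ m ∈ (w i p).index,
      (s i).left p ⊗ₜ[k] ((w i p).left m ⊗ₜ[k] ((w i p).right m ⊗ₜ[k] r.right i))
    = ∑ i ∈ r.index, ∑ q ∈ (t i).index, ∑ m ∈ (u i q).index,
      r.left i ⊗ₜ[k] ((u i q).left m ⊗ₜ[k] ((u i q).right m ⊗ₜ[k] (t i).right q)) := by
  have := congrArg (lTensor H ((TensorProduct.assoc k H H H).toLinearMap ∘ₗ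
    rTensor H (comul (R := k) (A := H)))) (sum_tmul_tmul_eq r s t)
  simp only [map_sum, lTensor_tmul, coe_comp, Function.comp_apply, rTensor_tmul,
    LinearEquiv.coe_coe] at this
  calc ∑ i ∈ r.index, ∑ p ∈ (s i).index, ∑ m ∈ (w i p).index,
      (s i).left p ⊗ₜ[k] ((w i p).left m ⊗ₜ[k] ((w i p).right m ⊗ₜ[k] r.right i))
      = ∑ i ∈ r.index, ∑ p ∈ (s i).index, (s i).left p ⊗ₜ[k]
          ((TensorProduct.assoc k H H H) ((comul (R := k) ((s i).right p)) ⊗ₜ[k] r.right i)) := by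
        refine Finset.sum_congr rfl fun i _ => Finset.sum_congr rfl fun p _ => ?_
        rw [← (w i p).eq]
        simp [sum_tmul, tmul_sum]
    _ = ∑ i ∈ r.index, ∑ q ∈ (t i).index, r.left i ⊗ₜ[k]
          ((TensorProduct.assoc k H H H) ((comul (R := k) ((t i).left q)) ⊗ₜ[k] (t i).right q)) := this
    _ = _ := by
        refine Finset.sum_congr rfl fun i _ => Finset.sum_congr rfl fun q _ => ?_
        rw [← (u i q).eq]
        simp [sum_tmul, tmul_sum]

/-- LC (left comb) = P5. -/
lemma LC_eq_P5 {μ₁ μ₂ : ∀ i, κ₁ i → Type*} (w : ∀ i p, Coalgebra.Repr k ((s i).left p) (μ₁ i p))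
    (x : ∀ i p, Coalgebra.Repr k ((s i).right p) (μ₂ i p)) :
    ∑ i ∈ r.index, ∑ p ∈ (s i).index, ∑ m ∈ (w i p).index,
      (w i p).left m ⊗ₜ[k] ((w i p).right m ⊗ₜ[k] ((s i).right p ⊗ₜ[k] r.right i))
    = ∑ i ∈ r.index, ∑ p ∈ (s i).index, ∑ m ∈ (x i p).index,
      (s i).left p ⊗ₜ[k] ((x i p).left m ⊗ₜ[k] ((x i p).right m ⊗ₜ[k] r.right i)) := by
  refine Finset.sum_congr rfl fun i _ => ?_
  have := congrArg (lTensor H (lTensor H ((TensorProduct.mk k H H).flip (r.right i))))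
    (sum_tmul_tmul_eq (s i) (w i) (x i))
  simpa [map_sum] using this

end patterns

end QPBAux

namespace QPBAux
open HopfAlgebra

section contr
variable {k H : Type*} [CommRing k] [Ring H] [HopfAlgebra k H]

noncomputable def cR : H ⊗[k] H →ₗ[k] H :=
  mul' k H ∘ₗ (antipode (R := k) (A := H)).rTensor H
noncomputable def cL : H ⊗[k] H →ₗ[k] H :=
  mul' k H ∘ₗ (antipode (R := k) (A := H)).lTensor H

@[simp] lemma cR_tmul (x y : H) : (cR (k := k)) (x ⊗ₜ y) = antipode (R := k) x * y := rfl
@[simp] lemma cL_tmul (x y : H) : (cL (k := k)) (x ⊗ₜ y) = x * antipode (R := k) y := rfl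

/-- `∑ h₁ ⊗ (S h₂ * h₃) = h ⊗ 1`. -/
lemma contr1 {h : H} {ι : Type*} {κ₁ : ι → Type*} (r : Coalgebra.Repr k h ι)
    (s : ∀ i, Coalgebra.Repr k (r.left i) (κ₁ i)) :
    ∑ i ∈ r.index, ∑ p ∈ (s i).index,
      (s i).left p ⊗ₜ[k] (antipode (R := k) ((s i).right p) * r.right i)
    = h ⊗ₜ[k] (1 : H) := by
  set t := fun i => ℛ k (r.right i) with ht
  have h1 := congrArg (lTensor H (cR (k := k))) (sum_tmul_tmul_eq r s t)
  simp only [map_sum, lTensor_tmul, cR_tmul] at h1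
  rw [h1]
  have h2 : ∀ i ∈ r.index,
      ∑ q ∈ (t i).index, r.left i ⊗ₜ[k] (antipode (R := k) ((t i).left q) * (t i).right q)
      = (counit (R := k) (r.right i) • r.left i) ⊗ₜ[k] (1 : H) := by
    intro i _
    rw [← tmul_sum, sum_antipode_mul_eq_smul (t i), tmul_smul, smul_tmul']
  rw [Finset.sum_congr rfl h2, ← sum_tmul, sum_smul_counit r]

/-- `∑ (h₁ * S h₂) ⊗ h₃ = 1 ⊗ h`. -/
lemma contr1' {h : H} {ι : Type*} {κ₂ : ι → Type*} (r : Coalgebra.Repr k h ι)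
    (t : ∀ i, Coalgebra.Repr k (r.right i) (κ₂ i)) :
    ∑ i ∈ r.index, ∑ q ∈ (t i).index,
      (r.left i * antipode (R := k) ((t i).left q)) ⊗ₜ[k] (t i).right q
    = (1 : H) ⊗ₜ[k] h := by
  set s := fun i => ℛ k (r.left i) with hs
  have h1 := congrArg ((cL (k := k)).rTensor H ∘ₗ (TensorProduct.assoc k H H H).symm.toLinearMap)
    (sum_tmul_tmul_eq r s t)
  simp only [map_sum, coe_comp, Function.comp_apply, LinearEquiv.coe_coe, assoc_symm_tmul,
    rTensor_tmul, cL_tmul] at h1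
  rw [← h1]
  have h2 : ∀ i ∈ r.index,
      ∑ p ∈ (s i).index, ((s i).left p * antipode (R := k) ((s i).right p)) ⊗ₜ[k] r.right i
      = (1 : H) ⊗ₜ[k] (counit (R := k) (r.left i) • r.right i) := by
    intro i _
    rw [← sum_tmul, sum_mul_antipode_eq_smul (s i), smul_tmul]
  rw [Finset.sum_congr rfl h2, ← tmul_sum, sum_counit_smul r]

/-- `∑ h₁ ⊗ ((S h₂ * h₃) ⊗ h₄) = ∑ h₁ ⊗ (1 ⊗ h₂)`. -/
lemma contrM {h : H} {ι : Type*} {κ₁ κ₂ : ι → Type*} (r : Coalgebra.Repr k h ι)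
    (s : ∀ i, Coalgebra.Repr k (r.left i) (κ₁ i))
    (t : ∀ i, Coalgebra.Repr k (r.right i) (κ₂ i)) :
    ∑ i ∈ r.index, ∑ p ∈ (s i).index, ∑ q ∈ (t i).index,
      (s i).left p ⊗ₜ[k]
        ((antipode (R := k) ((s i).right p) * (t i).left q) ⊗ₜ[k] (t i).right q)
    = ∑ i ∈ r.index, r.left i ⊗ₜ[k] ((1 : H) ⊗ₜ[k] r.right i) := by
  set u := fun i q => ℛ k ((t i).left q) with hu
  have base : _ := (P1_eq_RC r s t (fun i q => ℛ k _)).trans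
    (P2_eq_RC r t u (fun i q => ℛ k _)).symm
  have h1 := congrArg (lTensor H ((cR (k := k)).rTensor H ∘ₗ
    (TensorProduct.assoc k H H H).symm.toLinearMap)) base
  simp only [map_sum, lTensor_tmul, coe_comp, Function.comp_apply, LinearEquiv.coe_coe,
    assoc_symm_tmul, rTensor_tmul, cR_tmul] at h1
  rw [h1]
  refine Finset.sum_congr rfl fun i hi => ?_
  have h2 : ∀ q ∈ (t i).index,
      ∑ m ∈ (u i q).index, r.left i ⊗ₜ[k]
        ((antipode (R := k) ((u i q).left m) * (u i q).right m) ⊗ₜ[k] (t i).right q)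
      = r.left i ⊗ₜ[k] ((1 : H) ⊗ₜ[k] (counit (R := k) ((t i).left q) • (t i).right q)) := by
    intro q _
    rw [← tmul_sum, ← sum_tmul, sum_antipode_mul_eq_smul (u i q), smul_tmul]
  rw [Finset.sum_congr rfl h2, ← tmul_sum, ← tmul_sum, sum_counit_smul (t i)]

/-- `∑ h₁ ⊗ ((h₂ * S h₃) ⊗ h₄) = ∑ h₁ ⊗ (1 ⊗ h₂)`. -/
lemma contrM' {h : H} {ι : Type*} {κ₁ κ₂ : ι → Type*} (r : Coalgebra.Repr k h ι)
    (s : ∀ i, Coalgebra.Repr k (r.left i) (κ₁ i))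
    (t : ∀ i, Coalgebra.Repr k (r.right i) (κ₂ i)) :
    ∑ i ∈ r.index, ∑ p ∈ (s i).index, ∑ q ∈ (t i).index,
      (s i).left p ⊗ₜ[k]
        (((s i).right p * antipode (R := k) ((t i).left q)) ⊗ₜ[k] (t i).right q)
    = ∑ i ∈ r.index, r.left i ⊗ₜ[k] ((1 : H) ⊗ₜ[k] r.right i) := by
  set u := fun i q => ℛ k ((t i).left q) with hu
  have base : _ := (P1_eq_RC r s t (fun i q => ℛ k _)).trans
    (P2_eq_RC r t u (fun i q => ℛ k _)).symm
  have h1 := congrArg (lTensor H ((cL (k := k)).rTensor H ∘ₗ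
    (TensorProduct.assoc k H H H).symm.toLinearMap)) base
  simp only [map_sum, lTensor_tmul, coe_comp, Function.comp_apply, LinearEquiv.coe_coe,
    assoc_symm_tmul, rTensor_tmul, cL_tmul] at h1
  rw [h1]
  refine Finset.sum_congr rfl fun i hi => ?_
  have h2 : ∀ q ∈ (t i).index,
      ∑ m ∈ (u i q).index, r.left i ⊗ₜ[k]
        (((u i q).left m * antipode (R := k) ((u i q).right m)) ⊗ₜ[k] (t i).right q)
      = r.left i ⊗ₜ[k] ((1 : H) ⊗ₜ[k] (counit (R := k) ((t i).left q) • (t i).right q)) := by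
    intro q _
    rw [← tmul_sum, ← sum_tmul, sum_mul_antipode_eq_smul (u i q), smul_tmul]
  rw [Finset.sum_congr rfl h2, ← tmul_sum, ← tmul_sum, sum_counit_smul (t i)]

end contr
end QPBAux

namespace QPBAux
open HopfAlgebra

section conv
variable {k H A' : Type*} [CommRing k] [Ring H] [Bialgebra k H] [Ring A'] [Algebra k A']

/-- Convolution product on `Hom(H, A')`. -/
noncomputable def conv (f g : H →ₗ[k] A') : H →ₗ[k] A' :=
  mul' k A' ∘ₗ TensorProduct.map f g ∘ₗ comul

lemma conv_apply (f g : H →ₗ[k] A') {h : H} {ι : Type*} (r : Coalgebra.Repr k h ι) :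
    conv f g h = ∑ i ∈ r.index, f (r.left i) * g (r.right i) := by
  simp only [conv, coe_comp, Function.comp_apply, ← r.eq, map_sum, TensorProduct.map_tmul,
    mul'_apply]

/-- The convolution unit. -/
noncomputable def convOne : H →ₗ[k] A' := Algebra.linearMap k A' ∘ₗ counit

lemma convOne_apply (h : H) :
    (convOne (k := k) (H := H) (A' := A')) h = algebraMap k A' (counit (R := k) h) := rfl

lemma conv_convOne (f : H →ₗ[k] A') : conv f (convOne (k := k)) = f := by
  ext h
  rw [conv_apply f _ (ℛ k h)]
  have : ∀ i ∈ (ℛ k h).index,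
      f ((ℛ k h).left i) * convOne (k := k) (A' := A') ((ℛ k h).right i)
      = f (counit (R := k) ((ℛ k h).right i) • (ℛ k h).left i) := by
    intro i _
    rw [convOne_apply, ← Algebra.commutes, ← Algebra.smul_def, map_smul]
  rw [Finset.sum_congr rfl this, ← map_sum, sum_smul_counit (ℛ k h)]

lemma convOne_conv (f : H →ₗ[k] A') : conv (convOne (k := k)) f = f := by
  ext h
  rw [conv_apply _ f (ℛ k h)]
  have : ∀ i ∈ (ℛ k h).index,
      convOne (k := k) (A' := A') ((ℛ k h).left i) * f ((ℛ k h).right i)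
      = f (counit (R := k) ((ℛ k h).left i) • (ℛ k h).right i) := by
    intro i _
    rw [convOne_apply, ← Algebra.smul_def, map_smul]
  rw [Finset.sum_congr rfl this, ← map_sum, sum_counit_smul (ℛ k h)]

lemma conv_assoc (f g p : H →ₗ[k] A') : conv (conv f g) p = conv f (conv g p) := by
  ext h
  set r := ℛ k h
  set s := fun i => ℛ k (r.left i)
  set t := fun i => ℛ k (r.right i)
  have base := sum_map_tmul_tmul_eq (R := k) (f : H →ₗ[k] A') (g : H →ₗ[k] A')
    (p : H →ₗ[k] A') h (repr := r) (a₁ := s) (a₂ := t)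
  have h1 := congrArg (mul' k A' ∘ₗ lTensor A' (mul' k A')) base
  simp only [map_sum, coe_comp, Function.comp_apply, lTensor_tmul, mul'_apply] at h1
  rw [conv_apply (conv f g) p r, conv_apply f (conv g p) r]
  calc ∑ i ∈ r.index, conv f g (r.left i) * p (r.right i)
      = ∑ i ∈ r.index, ∑ m ∈ (s i).index,
          f ((s i).left m) * (g ((s i).right m) * p (r.right i)) := by
        refine Finset.sum_congr rfl fun i _ => ?_
        rw [conv_apply f g (s i), Finset.sum_mul]
        exact Finset.sum_congr rfl fun m _ => mul_assoc _ _ _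
    _ = ∑ i ∈ r.index, ∑ m ∈ (t i).index,
          f (r.left i) * (g ((t i).left m) * p ((t i).right m)) := h1.symm
    _ = ∑ i ∈ r.index, f (r.left i) * conv g p (r.right i) := by
        refine Finset.sum_congr rfl fun i _ => ?_
        rw [conv_apply g p (t i), Finset.mul_sum]

lemma conv_unique {f g p : H →ₗ[k] A'} (h1 : conv f g = convOne (k := k))
    (h2 : conv g p = convOne (k := k)) : f = p := by
  rw [← conv_convOne f, ← h2, ← conv_assoc, h1, convOne_conv]

end conv
end QPBAux

namespace QPBAux
open HopfAlgebra

section antipodeLemmas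
variable {k H : Type*} [CommRing k] [Ring H] [HopfAlgebra k H]

lemma comul_one' : comul (R := k) (1 : H) = (1 : H) ⊗ₜ[k] (1 : H) := by
  simpa [Algebra.TensorProduct.one_def] using map_one (Bialgebra.comulAlgHom k H)

lemma antipode_one' : antipode (R := k) (1 : H) = 1 := by
  have h := mul_antipode_rTensor_comul_apply (R := k) (A := H) (1 : H)
  rw [comul_one'] at h
  simpa using h

private lemma sum_comm4 {α β γ δ M : Type*} [AddCommMonoid M] (s : Finset α)
    (t : α → Finset β) (a : Finset γ) (b : γ → Finset δ) (f : α → β → γ → δ → M) :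
    ∑ i ∈ s, ∑ p ∈ t i, ∑ j ∈ a, ∑ q ∈ b j, f i p j q
    = ∑ j ∈ a, ∑ q ∈ b j, ∑ i ∈ s, ∑ p ∈ t i, f i p j q := by
  have h1 : ∀ i, ∑ p ∈ t i, ∑ j ∈ a, ∑ q ∈ b j, f i p j q
      = ∑ j ∈ a, ∑ q ∈ b j, ∑ p ∈ t i, f i p j q := fun i => by
    rw [Finset.sum_comm]
    exact Finset.sum_congr rfl fun j _ => Finset.sum_comm
  rw [Finset.sum_congr rfl (fun i _ => h1 i), Finset.sum_comm]
  exact Finset.sum_congr rfl fun j _ => Finset.sum_comm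

noncomputable def reprOne : Coalgebra.Repr k (1 : H) Unit where
  index := (Finset.univ : Finset Unit)
  left _ := 1
  right _ := 1
  eq := by
    rw [show (CoalgebraStruct.comul (R := k) (1 : H)) = (1 : H) ⊗ₜ[k] (1 : H) from comul_one']
    simp

noncomputable def reprMul {x y : H} {ι ι' : Type*} (r : Coalgebra.Repr k x ι)
    (u : Coalgebra.Repr k y ι') : Coalgebra.Repr k (x * y) (ι × ι') where
  index := r.index ×ˢ u.index
  left p := r.left p.1 * u.left p.2
  right p := r.right p.1 * u.right p.2
  eq := by
    rw [Finset.sum_product,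
      show (CoalgebraStruct.comul (R := k) (x * y))
        = comul (R := k) x * comul (R := k) y from Bialgebra.comul_mul x y,
      ← r.eq, ← u.eq, Finset.sum_mul_sum]
    simp [Algebra.TensorProduct.tmul_mul_tmul]

@[simp] lemma reprMul_index {x y : H} {ι ι' : Type*} (r : Coalgebra.Repr k x ι) (u : Coalgebra.Repr k y ι') :
    (reprMul r u).index = r.index ×ˢ u.index := rfl
@[simp] lemma reprMul_left {x y : H} {ι ι' : Type*} (r : Coalgebra.Repr k x ι) (u : Coalgebra.Repr k y ι')
    (p : ι × ι') : (reprMul r u).left p = r.left p.1 * u.left p.2 := rfl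
@[simp] lemma reprMul_right {x y : H} {ι ι' : Type*} (r : Coalgebra.Repr k x ι) (u : Coalgebra.Repr k y ι')
    (p : ι × ι') : (reprMul r u).right p = r.right p.1 * u.right p.2 := rfl

private lemma smul_helper (s t : k) (d b : H) :
    ((s * t) • (1 : H)) * (d * b) = (t • d) * (s • b) := by
  rw [smul_mul_assoc, one_mul, mul_comm s t, mul_smul, smul_mul_assoc, mul_smul_comm]

/-- Auxiliary map for the antimultiplicativity proof:
`(u₁⊗(u₂⊗u₃))⊗(v₁⊗(v₂⊗v₃)) ↦ S(u₁v₁) * (u₂ * ((v₂ * S v₃) * S u₃))`. -/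
noncomputable def Gmap : (H ⊗[k] (H ⊗[k] H)) ⊗[k] (H ⊗[k] (H ⊗[k] H)) →ₗ[k] H :=
  mul' k H ∘ₗ
    TensorProduct.map (antipode (R := k) ∘ₗ mul' k H)
      (mul' k H ∘ₗ
        lTensor H (mul' k H ∘ₗ TensorProduct.map (cL (k := k)) (antipode (R := k))) ∘ₗ
        lTensor H (TensorProduct.comm k H (H ⊗[k] H)).toLinearMap ∘ₗ
        (TensorProduct.assoc k H H (H ⊗[k] H)).toLinearMap) ∘ₗ
    (TensorProduct.tensorTensorTensorComm k H (H ⊗[k] H) H (H ⊗[k] H)).toLinearMap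

@[simp] lemma Gmap_tmul (u₁ u₂ u₃ v₁ v₂ v₃ : H) :
    (Gmap (k := k)) ((u₁ ⊗ₜ (u₂ ⊗ₜ u₃)) ⊗ₜ (v₁ ⊗ₜ (v₂ ⊗ₜ v₃)))
      = antipode (R := k) (u₁ * v₁) *
        (u₂ * ((v₂ * antipode (R := k) v₃) * antipode (R := k) u₃)) := by
  simp [Gmap, TensorProduct.tensorTensorTensorComm_tmul]

lemma antipode_mul' (x y : H) :
    antipode (R := k) (x * y) = antipode (R := k) y * antipode (R := k) x := by
  classical
  set r := ℛ k x with hr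
  set rs := fun i => ℛ k (r.left i) with hrs
  set rt := fun i => ℛ k (r.right i) with hrt
  set u := ℛ k y with hu
  set us := fun j => ℛ k (u.left j) with hus
  set ut := fun j => ℛ k (u.right j) with hut
  have Ex := sum_tmul_tmul_eq r rs rt
  have Ey := sum_tmul_tmul_eq u us ut
  have eq0 : (∑ i ∈ r.index, ∑ p ∈ (rs i).index,
        (rs i).left p ⊗ₜ[k] ((rs i).right p ⊗ₜ[k] r.right i)) ⊗ₜ[k]
      (∑ j ∈ u.index, ∑ q ∈ (us j).index,
        (us j).left q ⊗ₜ[k] ((us j).right q ⊗ₜ[k] u.right j))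
      = (∑ i ∈ r.index, ∑ p ∈ (rt i).index,
        r.left i ⊗ₜ[k] ((rt i).left p ⊗ₜ[k] (rt i).right p)) ⊗ₜ[k]
      (∑ j ∈ u.index, ∑ q ∈ (ut j).index,
        u.left j ⊗ₜ[k] ((ut j).left q ⊗ₜ[k] (ut j).right q)) := by
    rw [Ex, Ey]
  have eq1 := congrArg (Gmap (k := k)) eq0
  simp only [TensorProduct.sum_tmul, TensorProduct.tmul_sum, map_sum, Gmap_tmul] at eq1
  have way1 : ∑ i ∈ r.index, ∑ p ∈ (rt i).index, ∑ j ∈ u.index, ∑ q ∈ (ut j).index,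
      antipode (R := k) (r.left i * u.left j) *
        ((rt i).left p * (((ut j).left q * antipode (R := k) ((ut j).right q)) *
          antipode (R := k) ((rt i).right p)))
      = antipode (R := k) (x * y) := by
    have stepq : ∀ i p j,
        ∑ q ∈ (ut j).index, antipode (R := k) (r.left i * u.left j) *
          ((rt i).left p * (((ut j).left q * antipode (R := k) ((ut j).right q)) *
            antipode (R := k) ((rt i).right p)))
        = counit (R := k) (u.right j) •
            (antipode (R := k) (r.left i * u.left j) *
              ((rt i).left p * antipode (R := k) ((rt i).right p))) := by
      intro i p j
      rw [← Finset.mul_sum, ← Finset.mul_sum, ← Finset.sum_mul,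
        sum_mul_antipode_eq_smul (ut j), smul_mul_assoc, one_mul, mul_smul_comm, mul_smul_comm]
    have stepj : ∀ i p,
        ∑ j ∈ u.index, counit (R := k) (u.right j) •
            (antipode (R := k) (r.left i * u.left j) *
              ((rt i).left p * antipode (R := k) ((rt i).right p)))
        = antipode (R := k) (r.left i * y) *
            ((rt i).left p * antipode (R := k) ((rt i).right p)) := by
      intro i p
      simp_rw [← smul_mul_assoc]
      rw [← Finset.sum_mul]
      congr 1
      have h' : ∀ j ∈ u.index, counit (R := k) (u.right j) •
            antipode (R := k) (r.left i * u.left j)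
          = (antipode (R := k) ∘ₗ mulLeft k (r.left i))
              (counit (R := k) (u.right j) • u.left j) := by
        intro j _
        simp [mul_smul_comm]
      rw [Finset.sum_congr rfl h', ← map_sum, sum_smul_counit u]
      simp
    have stepp : ∀ i,
        ∑ p ∈ (rt i).index, antipode (R := k) (r.left i * y) *
            ((rt i).left p * antipode (R := k) ((rt i).right p))
        = counit (R := k) (r.right i) • antipode (R := k) (r.left i * y) := by
      intro i
      rw [← Finset.mul_sum, sum_mul_antipode_eq_smul (rt i), mul_smul_comm, mul_one]
    calc ∑ i ∈ r.index, ∑ p ∈ (rt i).index, ∑ j ∈ u.index, ∑ q ∈ (ut j).index,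
        antipode (R := k) (r.left i * u.left j) *
          ((rt i).left p * (((ut j).left q * antipode (R := k) ((ut j).right q)) *
            antipode (R := k) ((rt i).right p)))
        = ∑ i ∈ r.index, ∑ p ∈ (rt i).index,
            antipode (R := k) (r.left i * y) *
              ((rt i).left p * antipode (R := k) ((rt i).right p)) := by
          refine Finset.sum_congr rfl fun i _ => Finset.sum_congr rfl fun p _ => ?_
          rw [Finset.sum_congr rfl (fun j _ => stepq i p j), stepj i p]
      _ = ∑ i ∈ r.index, counit (R := k) (r.right i) • antipode (R := k) (r.left i * y) :=
          Finset.sum_congr rfl fun i _ => stepp i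
      _ = antipode (R := k) (x * y) := by
          have h' : ∀ i ∈ r.index, counit (R := k) (r.right i) • antipode (R := k) (r.left i * y)
              = (antipode (R := k) ∘ₗ mulRight k y)
                  (counit (R := k) (r.right i) • r.left i) := by
            intro i _
            simp [smul_mul_assoc]
          rw [Finset.sum_congr rfl h', ← map_sum, sum_smul_counit r]
          simp
  have way2 : ∑ i ∈ r.index, ∑ p ∈ (rs i).index, ∑ j ∈ u.index, ∑ q ∈ (us j).index,
      antipode (R := k) ((rs i).left p * (us j).left q) *
        ((rs i).right p * (((us j).right q * antipode (R := k) (u.right j)) *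
          antipode (R := k) (r.right i)))
      = antipode (R := k) y * antipode (R := k) x := by
    have key : ∀ i j, ∑ p ∈ (rs i).index, ∑ q ∈ (us j).index,
        antipode (R := k) ((rs i).left p * (us j).left q) *
          ((rs i).right p * (us j).right q)
        = (counit (R := k) (r.left i) * counit (R := k) (u.left j)) • (1 : H) := by
      intro i j
      have hcm : comul (R := k) (r.left i * u.left j)
          = ∑ p ∈ (rs i).index, ∑ q ∈ (us j).index,
              ((rs i).left p * (us j).left q) ⊗ₜ[k] ((rs i).right p * (us j).right q) := by
        rw [Bialgebra.comul_mul, ← (rs i).eq, ← (us j).eq, Finset.sum_mul_sum]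
        simp [Algebra.TensorProduct.tmul_mul_tmul]
      have h2 := mul_antipode_rTensor_comul_apply (R := k) (A := H) (r.left i * u.left j)
      rw [hcm] at h2
      simp only [map_sum, rTensor_tmul, mul'_apply] at h2
      rw [h2, Bialgebra.counit_mul, Algebra.algebraMap_eq_smul_one]
    have rearr : ∀ i p j q,
        antipode (R := k) ((rs i).left p * (us j).left q) *
          ((rs i).right p * (((us j).right q * antipode (R := k) (u.right j)) *
            antipode (R := k) (r.right i)))
        = (antipode (R := k) ((rs i).left p * (us j).left q) *
            ((rs i).right p * (us j).right q)) *
          (antipode (R := k) (u.right j) * antipode (R := k) (r.right i)) := by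
      intro i p j q
      simp only [mul_assoc]
    calc ∑ i ∈ r.index, ∑ p ∈ (rs i).index, ∑ j ∈ u.index, ∑ q ∈ (us j).index,
        antipode (R := k) ((rs i).left p * (us j).left q) *
          ((rs i).right p * (((us j).right q * antipode (R := k) (u.right j)) *
            antipode (R := k) (r.right i)))
        = ∑ i ∈ r.index, ∑ j ∈ u.index,
            (counit (R := k) (u.left j) • antipode (R := k) (u.right j)) *
            (counit (R := k) (r.left i) • antipode (R := k) (r.right i)) := by
          refine Finset.sum_congr rfl fun i _ => ?_
          rw [Finset.sum_comm]
          refine Finset.sum_congr rfl fun j _ => ?_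
          rw [Finset.sum_congr rfl (fun p _ => Finset.sum_congr rfl
            (fun q _ => rearr i p j q))]
          simp_rw [← Finset.sum_mul]
          rw [key i j, smul_helper]
      _ = antipode (R := k) y * antipode (R := k) x := by
          have hy : ∑ j ∈ u.index, counit (R := k) (u.left j) • antipode (R := k) (u.right j)
              = antipode (R := k) y := by
            have h1 : ∀ j ∈ u.index, counit (R := k) (u.left j) • antipode (R := k) (u.right j)
                = antipode (R := k) (counit (R := k) (u.left j) • u.right j) := by
              intro j _; simp
            rw [Finset.sum_congr rfl h1, ← map_sum, sum_counit_smul u]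
          have hx : ∑ i ∈ r.index, counit (R := k) (r.left i) • antipode (R := k) (r.right i)
              = antipode (R := k) x := by
            have h2 : ∀ i ∈ r.index, counit (R := k) (r.left i) • antipode (R := k) (r.right i)
                = antipode (R := k) (counit (R := k) (r.left i) • r.right i) := by
              intro i _; simp
            rw [Finset.sum_congr rfl h2, ← map_sum, sum_counit_smul r]
          simp_rw [← Finset.sum_mul]
          rw [hy, ← Finset.mul_sum, hx]
  calc antipode (R := k) (x * y) = _ := way1.symm
    _ = ∑ j ∈ u.index, ∑ q ∈ (ut j).index, ∑ i ∈ r.index, ∑ p ∈ (rt i).index,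
        antipode (R := k) (r.left i * u.left j) *
          ((rt i).left p * (((ut j).left q * antipode (R := k) ((ut j).right q)) *
            antipode (R := k) ((rt i).right p))) :=
      sum_comm4 _ _ _ _ _
    _ = ∑ j ∈ u.index, ∑ q ∈ (us j).index, ∑ i ∈ r.index, ∑ p ∈ (rs i).index,
        antipode (R := k) ((rs i).left p * (us j).left q) *
          ((rs i).right p * (((us j).right q * antipode (R := k) (u.right j)) *
            antipode (R := k) (r.right i))) := eq1.symm
    _ = ∑ i ∈ r.index, ∑ p ∈ (rs i).index, ∑ j ∈ u.index, ∑ q ∈ (us j).index,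
        antipode (R := k) ((rs i).left p * (us j).left q) *
          ((rs i).right p * (((us j).right q * antipode (R := k) (u.right j)) *
            antipode (R := k) (r.right i))) := (sum_comm4 _ _ _ _ _).symm
    _ = antipode (R := k) y * antipode (R := k) x := way2

end antipodeLemmas
end QPBAux

namespace QPBAux
open HopfAlgebra

section comulAntipode
variable {k H : Type*} [CommRing k] [Ring H] [HopfAlgebra k H]

/-- The antipode is an anti-coalgebra morphism. -/
lemma comul_antipode' :
    (comul (R := k) (A := H)) ∘ₗ antipode (R := k)
      = (TensorProduct.comm k H H).toLinearMap ∘ₗ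
          TensorProduct.map (antipode (R := k)) (antipode (R := k)) ∘ₗ
          comul (R := k) := by
  set P : H →ₗ[k] H ⊗[k] H := (TensorProduct.comm k H H).toLinearMap ∘ₗ
      TensorProduct.map (antipode (R := k)) (antipode (R := k)) ∘ₗ comul (R := k) with hP
  refine conv_unique (g := comul (R := k) (A := H)) ?_ ?_
  · -- conv (Δ∘S) Δ = e
    ext h
    rw [conv_apply _ _ (ℛ k h), convOne_apply]
    have h1 : ∀ i ∈ (ℛ k h).index,
        ((comul (R := k) (A := H)) ∘ₗ antipode (R := k)) ((ℛ k h).left i) *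
          comul (R := k) ((ℛ k h).right i)
        = comul (R := k) (antipode (R := k) ((ℛ k h).left i) * (ℛ k h).right i) := by
      intro i _
      simp [Bialgebra.comul_mul]
    rw [Finset.sum_congr rfl h1, ← map_sum, sum_antipode_mul_eq_algebraMap_counit (ℛ k h)]
    simp
  · -- conv Δ P = e
    ext h
    rw [conv_apply _ _ (ℛ k h), convOne_apply]
    set r := ℛ k h
    set s := fun i => ℛ k (r.left i)
    set t := fun i => ℛ k (r.right i)
    have h1 : ∀ i ∈ r.index, comul (R := k) (r.left i) * P (r.right i)
        = ∑ p ∈ (s i).index, ∑ q ∈ (t i).index,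
            ((s i).left p * antipode (R := k) ((t i).right q)) ⊗ₜ[k]
              ((s i).right p * antipode (R := k) ((t i).left q)) := by
      intro i _
      rw [hP]
      simp only [coe_comp, Function.comp_apply, LinearEquiv.coe_coe]
      rw [← (s i).eq, ← (t i).eq]
      simp only [map_sum, TensorProduct.map_tmul, TensorProduct.comm_tmul]
      rw [Finset.sum_mul_sum]
      simp [Algebra.TensorProduct.tmul_mul_tmul]
    rw [Finset.sum_congr rfl h1]
    -- apply Υ to contrM'
    have base := contrM' r s t
    have h2 := congrArg ((cL (k := k)).rTensor H ∘ₗ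
      (TensorProduct.assoc k H H H).symm.toLinearMap ∘ₗ
      lTensor H (TensorProduct.comm k H H).toLinearMap) base
    simp only [map_sum, coe_comp, Function.comp_apply, LinearEquiv.coe_coe, lTensor_tmul,
      TensorProduct.comm_tmul, assoc_symm_tmul, rTensor_tmul, cL_tmul] at h2
    rw [h2, ← TensorProduct.sum_tmul, sum_mul_antipode_eq_smul r,
      Algebra.algebraMap_eq_smul_one, Algebra.TensorProduct.one_def, TensorProduct.smul_tmul']

/-- `comul (S h)` in terms of a representation of `comul h`. -/
lemma comul_antipode_sum {h : H} {ι : Type*} (r : Coalgebra.Repr k h ι) :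
    comul (R := k) (antipode (R := k) h)
      = ∑ i ∈ r.index, antipode (R := k) (r.right i) ⊗ₜ[k] antipode (R := k) (r.left i) := by
  have := congrFun (congrArg DFunLike.coe (comul_antipode' (k := k) (H := H))) h
  simp only [coe_comp, Function.comp_apply, LinearEquiv.coe_coe] at this
  rw [this, ← r.eq]
  simp

end comulAntipode
end QPBAux

namespace QPBAux
open HopfAlgebra

section contr6
variable {k H : Type*} [CommRing k] [Ring H] [HopfAlgebra k H]

/-- The map `h₁⊗(h₂⊗(h₃⊗h₄)) ↦ S h₃ ⊗ ((h₁ * S h₂) ⊗ h₄)`. -/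
noncomputable def Phi6 : H ⊗[k] (H ⊗[k] (H ⊗[k] H)) →ₗ[k] H ⊗[k] (H ⊗[k] H) :=
  (TensorProduct.assoc k H H H).toLinearMap ∘ₗ
  (TensorProduct.comm k H H).toLinearMap.rTensor H ∘ₗ
  (TensorProduct.assoc k H H H).symm.toLinearMap ∘ₗ
  lTensor H ((antipode (R := k) (A := H)).rTensor H) ∘ₗ
  (cL (k := k)).rTensor (H ⊗[k] H) ∘ₗ
  (TensorProduct.assoc k H H (H ⊗[k] H)).symm.toLinearMap

@[simp] lemma Phi6_tmul (x y z w : H) :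
    (Phi6 (k := k)) (x ⊗ₜ (y ⊗ₜ (z ⊗ₜ w)))
      = antipode (R := k) z ⊗ₜ[k] ((x * antipode (R := k) y) ⊗ₜ[k] w) := by
  simp [Phi6]

/-- `∑ S h₃ ⊗ ((h₁ * S h₂) ⊗ h₄) = ∑ S h₁ ⊗ (1 ⊗ h₂)`. -/
lemma contr6 {h : H} {ι : Type*} {κ₂ : ι → Type*} {μ : ∀ i, κ₂ i → Type*}
    (r : Coalgebra.Repr k h ι) (t : ∀ i, Coalgebra.Repr k (r.right i) (κ₂ i))
    (u : ∀ i q, Coalgebra.Repr k ((t i).left q) (μ i q)) :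
    ∑ i ∈ r.index, ∑ q ∈ (t i).index, ∑ m ∈ (u i q).index,
      antipode (R := k) ((u i q).right m) ⊗ₜ[k]
        ((r.left i * antipode (R := k) ((u i q).left m)) ⊗ₜ[k] (t i).right q)
    = ∑ i ∈ r.index, antipode (R := k) (r.left i) ⊗ₜ[k] ((1 : H) ⊗ₜ[k] r.right i) := by
  set s := fun i => ℛ k (r.left i) with hs
  set w := fun i p => ℛ k ((s i).left p) with hw
  set xx := fun i p => ℛ k ((s i).right p) with hxx
  have base := (LC_eq_P5 r s w xx).trans (P5_eq_P2 r s t xx u)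
  have h1 := congrArg (Phi6 (k := k)) base
  simp only [map_sum, Phi6_tmul] at h1
  rw [← h1]
  refine Finset.sum_congr rfl fun i _ => ?_
  have h2 : ∀ p ∈ (s i).index,
      ∑ m ∈ (w i p).index, antipode (R := k) ((s i).right p) ⊗ₜ[k]
        (((w i p).left m * antipode (R := k) ((w i p).right m)) ⊗ₜ[k] r.right i)
      = (counit (R := k) ((s i).left p) • antipode (R := k) ((s i).right p)) ⊗ₜ[k]
          ((1 : H) ⊗ₜ[k] r.right i) := by
    intro p _
    rw [← TensorProduct.tmul_sum, ← TensorProduct.sum_tmul,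
      sum_mul_antipode_eq_smul (w i p), ← TensorProduct.smul_tmul', TensorProduct.tmul_smul,
      TensorProduct.smul_tmul']
  rw [Finset.sum_congr rfl h2]
  have h3 : ∀ p ∈ (s i).index,
      (counit (R := k) ((s i).left p) • antipode (R := k) ((s i).right p)) ⊗ₜ[k]
          ((1 : H) ⊗ₜ[k] r.right i)
      = (antipode (R := k) (counit (R := k) ((s i).left p) • (s i).right p)) ⊗ₜ[k]
          ((1 : H) ⊗ₜ[k] r.right i) := by
    intro p _
    rw [← map_smul]
  rw [Finset.sum_congr rfl h3, ← TensorProduct.sum_tmul, ← map_sum, sum_counit_smul (s i)]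

end contr6
end QPBAux

namespace QPBAux
open HopfAlgebra QPB

section bridge
variable {k H A : Type*} [CommRing k] [Ring H] [Ring A] [HopfAlgebra k H] [Algebra k A]

lemma adAction_eq (j : H →ₐ[k] A) {h : H} (a : A) {ι : Type*} (r : Coalgebra.Repr k h ι) :
    QPB.adAction k j (h ⊗ₜ[k] a)
      = ∑ i ∈ r.index, j (r.left i) * (a * j (antipode (R := k) (r.right i))) := by
  have hc : comul (R := k) h = ∑ i ∈ r.index, r.left i ⊗ₜ[k] r.right i := r.eq.symm
  simp only [QPB.adAction, coe_comp, Function.comp_apply, rTensor_tmul, hc,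
    TensorProduct.sum_tmul, map_sum, LinearEquiv.coe_coe, TensorProduct.assoc_tmul,
    lTensor_tmul, TensorProduct.comm_tmul, TensorProduct.map_tmul, mul'_apply, id_coe, id_eq,
    AlgHom.toLinearMap_apply]

lemma adAction_mul_eq (j : H →ₐ[k] A) (a : A) {x y : H}
    {ι ι' : Type*} (r : Coalgebra.Repr k x ι) (u : Coalgebra.Repr k y ι') :
    QPB.adAction k j ((x * y) ⊗ₜ[k] a)
      = ∑ i ∈ r.index, ∑ p ∈ u.index, j (r.left i * u.left p) *
          (a * j (antipode (R := k) (r.right i * u.right p))) := by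
  rw [adAction_eq j a (reprMul r u)]
  exact Finset.sum_product _ _ _

variable (c : QPB.ComodAlg k H A) (j : H →ₐ[k] A)

lemma mem_coinv_iff (a : A) : a ∈ c.coinv ↔ c.δ a = a ⊗ₜ[k] (1 : H) := Iff.rfl

lemma delta_j (hj : QPB.IsComodMap k c j.toLinearMap) {x : H} {ι : Type*} (r : Coalgebra.Repr k x ι) :
    c.δ (j x) = ∑ i ∈ r.index, j (r.left i) ⊗ₜ[k] r.right i := by
  have := congrFun (congrArg DFunLike.coe hj) x
  simp only [coe_comp, Function.comp_apply, AlgHom.toLinearMap_apply] at this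
  rw [this, ← r.eq]
  simp

lemma delta_jS (hj : QPB.IsComodMap k c j.toLinearMap) {x : H} {ι : Type*} (r : Coalgebra.Repr k x ι) :
    c.δ (j (antipode (R := k) x))
      = ∑ i ∈ r.index,
          j (antipode (R := k) (r.right i)) ⊗ₜ[k] antipode (R := k) (r.left i) := by
  have := congrFun (congrArg DFunLike.coe hj) (antipode (R := k) x)
  simp only [coe_comp, Function.comp_apply, AlgHom.toLinearMap_apply] at this
  rw [this, comul_antipode_sum r]
  simp

lemma counit_delta {a : A} {F : Finset (A × H)}
    (hF : c.δ a = ∑ x ∈ F, x.1 ⊗ₜ[k] x.2) :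
    ∑ x ∈ F, counit (R := k) x.2 • x.1 = a := by
  have := congrFun (congrArg DFunLike.coe c.counit_id) a
  simp only [coe_comp, Function.comp_apply, AlgHom.toLinearMap_apply, id_coe, id_eq,
    LinearEquiv.coe_coe] at this
  rw [hF] at this
  simpa [TensorProduct.rid_tmul] using this

lemma coassoc_delta {a : A} {F : Finset (A × H)}
    (hF : c.δ a = ∑ x ∈ F, x.1 ⊗ₜ[k] x.2) {τ : A × H → Type*} (t : ∀ x : A × H, Coalgebra.Repr k x.2 (τ x)) :
    ∑ x ∈ F, c.δ x.1 ⊗ₜ[k] x.2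
      = ∑ x ∈ F, ∑ p ∈ (t x).index, (x.1 ⊗ₜ[k] (t x).left p) ⊗ₜ[k] (t x).right p := by
  have := congrFun (congrArg DFunLike.coe c.coassoc) a
  simp only [coe_comp, Function.comp_apply, AlgHom.toLinearMap_apply, LinearEquiv.coe_coe] at this
  rw [hF] at this
  simp only [map_sum, TensorProduct.map_tmul, id_coe, id_eq, AlgHom.toLinearMap_apply] at this
  have h2 := congrArg (TensorProduct.assoc k A H H).symm this
  simp only [map_sum, LinearEquiv.symm_apply_apply] at h2
  rw [h2]
  refine Finset.sum_congr rfl fun x _ => ?_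
  rw [← (t x).eq]
  simp [TensorProduct.tmul_sum]

end bridge
end QPBAux

open QPBAux Coalgebra HopfAlgebra

/-- smash product decomposition of a trivial extension. -/
theorem statement1 (k H A : Type*) [Field k] [Ring H] [Ring A]
    [HopfAlgebra k H] [Algebra k A]
    (hS : Function.Bijective (HopfAlgebra.antipode (R := k) (A := H)))
    (c : ComodAlg k H A) (j : H →ₐ[k] A) (hj : IsComodMap k c j.toLinearMap) :
    -- `▷ = adAction k j` preserves the coinvariants `B = A^{co H}` ...
    (∀ (h : H) (b : A), b ∈ c.coinv → adAction k j (h ⊗ₜ[k] b) ∈ c.coinv) ∧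
    -- ... and makes `B` (indeed all of `A`, with the axioms below restricting to `B`)
    -- an `H`-module algebra:  `1 ▷ a = a`,
    (∀ a : A, adAction k j ((1 : H) ⊗ₜ[k] a) = a) ∧
    -- `(h h') ▷ a = h ▷ (h' ▷ a)`,
    ((adAction k j) ∘ₗ (LinearMap.rTensor A (LinearMap.mul' k H))
        = (adAction k j) ∘ₗ (LinearMap.lTensor H (adAction k j)) ∘ₗ
            (TensorProduct.assoc k H H A).toLinearMap) ∧
    -- `h ▷ 1 = ε(h) 1`,
    (∀ h : H, adAction k j (h ⊗ₜ[k] (1 : A))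
        = algebraMap k A (Coalgebra.counit (R := k) h)) ∧
    -- `h ▷ (a a') = (h₁ ▷ a)(h₂ ▷ a')`,
    (∀ (h : H) (a a' : A) (ι : Type*) (r : Coalgebra.Repr k h ι),
        adAction k j (h ⊗ₜ[k] (a * a'))
          = ∑ i ∈ r.index,
              adAction k j (r.left i ⊗ₜ[k] a) * adAction k j (r.right i ⊗ₜ[k] a')) ∧
    -- `θ : B ⊗ H → A`, `b ⊗ h ↦ b j(h)`, is a `k`-linear bijection ...
    (Function.Bijective
      ((LinearMap.mul' k A) ∘ₗ
        (TensorProduct.map (c.coinv.val.toLinearMap) j.toLinearMap))) ∧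
    -- ... which pulls the product of `A` back to the smash product
    -- `(b ⊗ h)(b' ⊗ h') = b (h₁ ▷ b') ⊗ h₂ h'` :
    (∀ (b b' : c.coinv) (h h' : H) (ι : Type*) (r : Coalgebra.Repr k h ι),
        ((b : A) * j h) * ((b' : A) * j h')
          = ∑ i ∈ r.index,
              (b : A) * adAction k j (r.left i ⊗ₜ[k] (b' : A)) * j (r.right i * h')) ∧
    -- ... and which intertwines the coaction `id ⊗ Δ` of `B ⊗ H` with the coaction of `A`,
    -- i.e. `θ` is an isomorphism of right `H`-comodule algebras `B ♯ H ≅ A`: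
    (c.δ.toLinearMap ∘ₗ
        ((LinearMap.mul' k A) ∘ₗ
          (TensorProduct.map (c.coinv.val.toLinearMap) j.toLinearMap))
      = (TensorProduct.map
            ((LinearMap.mul' k A) ∘ₗ
              (TensorProduct.map (c.coinv.val.toLinearMap) j.toLinearMap))
            (LinearMap.id : H →ₗ[k] H)) ∘ₗ
          (TensorProduct.assoc k (c.coinv) H H).symm.toLinearMap ∘ₗ
          (LinearMap.lTensor (c.coinv) (Coalgebra.comul (R := k) (A := H)))) := by

  classical
  have hbδ : ∀ b : A, b ∈ c.coinv → c.δ b = b ⊗ₜ[k] 1 := fun b hb => hb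
  refine ⟨?_, ?_, ?_, ?_, ?_, ?_, ?_, ?_⟩
  · -- (1) the action preserves coinvariants
    intro h b hb
    show c.δ (adAction k j (h ⊗ₜ[k] b)) = adAction k j (h ⊗ₜ[k] b) ⊗ₜ[k] 1
    set r := ℛ k h with hr
    set s := fun i => ℛ k (r.left i) with hsdef
    set t := fun i => ℛ k (r.right i) with htdef
    rw [adAction_eq j b r, map_sum]
    have hterm : ∀ i ∈ r.index,
        c.δ (j (r.left i) * (b * j (HopfAlgebra.antipode (R := k) (r.right i))))
        = ∑ p ∈ (s i).index, ∑ q ∈ (t i).index,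
            (j ((s i).left p) * (b * j (HopfAlgebra.antipode (R := k) ((t i).right q)))) ⊗ₜ[k]
              ((s i).right p * HopfAlgebra.antipode (R := k) ((t i).left q)) := by
      intro i _
      rw [map_mul, map_mul, hbδ b hb, delta_j c j hj (s i), delta_jS c j hj (t i),
        Finset.mul_sum, Finset.sum_mul]
      refine Finset.sum_congr rfl fun p _ => ?_
      rw [Finset.mul_sum]
      refine Finset.sum_congr rfl fun q _ => ?_
      rw [Algebra.TensorProduct.tmul_mul_tmul, Algebra.TensorProduct.tmul_mul_tmul, one_mul]
    rw [Finset.sum_congr rfl hterm]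
    have base := contrM' r s t
    have h1 := congrArg (⇑(TensorProduct.map (LinearMap.mul' k A ∘ₗ TensorProduct.map
        (LinearMap.mulRight k b ∘ₗ j.toLinearMap)
        (j.toLinearMap ∘ₗ HopfAlgebra.antipode (R := k))) (LinearMap.id (R := k) (M := H)) ∘ₗ
      (TensorProduct.assoc k H H H).symm.toLinearMap ∘ₗ
      LinearMap.lTensor H (TensorProduct.comm k H H).toLinearMap)) base
    simp only [map_sum, LinearMap.coe_comp, Function.comp_apply, LinearMap.lTensor_tmul,
      TensorProduct.comm_tmul, LinearEquiv.coe_coe, TensorProduct.assoc_symm_tmul,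
      TensorProduct.map_tmul, LinearMap.mul'_apply, LinearMap.mulRight_apply,
      AlgHom.toLinearMap_apply, LinearMap.id_coe, id_eq] at h1
    rw [TensorProduct.sum_tmul]
    simp only [mul_assoc] at h1 ⊢
    exact h1
  · -- (2) unit acts trivially
    intro a
    rw [adAction_eq j a (reprOne (k := k) (H := H))]
    simp [reprOne, antipode_one']
  · -- (3) associativity of the action
    apply TensorProduct.ext_threefold
    intro h h' a
    simp only [LinearMap.coe_comp, Function.comp_apply, LinearMap.rTensor_tmul,
      LinearMap.mul'_apply, LinearEquiv.coe_coe, TensorProduct.assoc_tmul,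
      LinearMap.lTensor_tmul]
    set r := ℛ k h with hr
    set u := ℛ k h' with hu
    rw [adAction_mul_eq j a r u, adAction_eq j a u, TensorProduct.tmul_sum, map_sum]
    have hterm : ∀ p ∈ u.index,
        adAction k j (h ⊗ₜ[k] (j (u.left p) * (a * j (HopfAlgebra.antipode (R := k) (u.right p)))))
        = ∑ i ∈ r.index, j (r.left i) *
            ((j (u.left p) * (a * j (HopfAlgebra.antipode (R := k) (u.right p)))) *
              j (HopfAlgebra.antipode (R := k) (r.right i))) :=
      fun p _ => adAction_eq j _ r
    rw [Finset.sum_congr rfl hterm]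
    rw [Finset.sum_comm]
    simp only [map_mul, antipode_mul', mul_assoc]
  · -- (4) action on 1
    intro h
    rw [adAction_eq j 1 (ℛ k h)]
    have h1 : ∀ i ∈ (ℛ k h).index,
        j ((ℛ k h).left i) * ((1 : A) * j (HopfAlgebra.antipode (R := k) ((ℛ k h).right i)))
        = j ((ℛ k h).left i * HopfAlgebra.antipode (R := k) ((ℛ k h).right i)) := by
      intro i _
      rw [one_mul, ← map_mul]
    rw [Finset.sum_congr rfl h1, ← map_sum, sum_mul_antipode_eq_smul (ℛ k h), map_smul, map_one,
      Algebra.algebraMap_eq_smul_one]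
  · -- (5) action is multiplicative
    intro h a a' ι r
    set s := fun i => ℛ k (r.left i) with hsdef
    set t := fun i => ℛ k (r.right i) with htdef
    rw [adAction_eq j (a * a') r]
    have hrhs : ∀ i ∈ r.index,
        adAction k j (r.left i ⊗ₜ[k] a) * adAction k j (r.right i ⊗ₜ[k] a')
        = ∑ p ∈ (s i).index, ∑ q ∈ (t i).index,
            (j ((s i).left p) * (a * j (HopfAlgebra.antipode (R := k) ((s i).right p)))) *
            (j ((t i).left q) * (a' * j (HopfAlgebra.antipode (R := k) ((t i).right q)))) := by
      intro i _
      rw [adAction_eq j a (s i), adAction_eq j a' (t i), Finset.sum_mul_sum]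
    rw [Finset.sum_congr rfl hrhs]
    have base := contrM r s t
    have h1 := congrArg (⇑(LinearMap.mul' k A ∘ₗ TensorProduct.map
        (LinearMap.mulRight k a ∘ₗ j.toLinearMap)
        (LinearMap.mul' k A ∘ₗ TensorProduct.map (LinearMap.mulRight k a' ∘ₗ j.toLinearMap)
          (j.toLinearMap ∘ₗ HopfAlgebra.antipode (R := k))))) base
    simp only [map_sum, LinearMap.coe_comp, Function.comp_apply, TensorProduct.map_tmul,
      LinearMap.mul'_apply, LinearMap.mulRight_apply, AlgHom.toLinearMap_apply, map_mul,
      map_one, one_mul] at h1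
    simp only [mul_assoc] at h1 ⊢
    exact h1.symm
  · -- (6) bijectivity
    set θ : ↥c.coinv ⊗[k] H →ₗ[k] A :=
      (LinearMap.mul' k A) ∘ₗ (TensorProduct.map (c.coinv.val.toLinearMap) j.toLinearMap)
      with hθ
    set M0 : A ⊗[k] H →ₗ[k] A :=
      LinearMap.mul' k A ∘ₗ LinearMap.lTensor A (j.toLinearMap ∘ₗ antipode (R := k)) with hM0
    set Ψ : A ⊗[k] H →ₗ[k] A ⊗[k] H :=
      (M0.rTensor H) ∘ₗ (TensorProduct.assoc k A H H).symm.toLinearMap ∘ₗ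
        (LinearMap.lTensor A (comul (R := k))) with hΨ
    set θA : A ⊗[k] H →ₗ[k] A :=
      LinearMap.mul' k A ∘ₗ LinearMap.lTensor A j.toLinearMap with hθA
    have hΨtm : ∀ (u : A) (v : H) (t : Coalgebra.Repr k v (H × H)),
        Ψ (u ⊗ₜ[k] v) = ∑ p ∈ t.index,
          (u * j (antipode (R := k) (t.left p))) ⊗ₜ[k] t.right p := by
      intro u v t
      simp only [hΨ, hM0, LinearMap.coe_comp, Function.comp_apply, LinearMap.lTensor_tmul]
      rw [← t.eq]
      simp only [TensorProduct.tmul_sum, map_sum, LinearEquiv.coe_coe,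
        TensorProduct.assoc_symm_tmul, LinearMap.rTensor_tmul, LinearMap.coe_comp,
        Function.comp_apply, LinearMap.lTensor_tmul, LinearMap.mul'_apply,
        AlgHom.toLinearMap_apply]
    have E8 : ∀ (b : ↥c.coinv) (h : H), Ψ (c.δ (θ (b ⊗ₜ[k] h))) = (b : A) ⊗ₜ[k] h := by
      intro b h
      set r := ℛ k h with hrdef
      set t := fun i => ℛ k (r.right i) with htdef
      have h0 : c.δ (θ (b ⊗ₜ[k] h))
          = ∑ i ∈ r.index, ((b : A) * j (r.left i)) ⊗ₜ[k] r.right i := by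
        have hbh : θ (b ⊗ₜ[k] h) = (b : A) * j h := by simp [hθ]
        rw [hbh, map_mul, hbδ (b : A) b.2, delta_j c j hj r, Finset.mul_sum]
        refine Finset.sum_congr rfl fun i _ => ?_
        rw [Algebra.TensorProduct.tmul_mul_tmul, one_mul]
      rw [h0, map_sum]
      have h1 : ∀ i ∈ r.index, Ψ (((b : A) * j (r.left i)) ⊗ₜ[k] r.right i)
          = ∑ q ∈ (t i).index, (((b : A) * j (r.left i)) *
              j (antipode (R := k) ((t i).left q))) ⊗ₜ[k] (t i).right q :=
        fun i _ => hΨtm _ _ (t i)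
      rw [Finset.sum_congr rfl h1]
      have base := contr1' r t
      have h2 := congrArg (⇑((LinearMap.mulLeft k (b : A) ∘ₗ j.toLinearMap).rTensor H)) base
      simp only [map_sum, LinearMap.rTensor_tmul, LinearMap.coe_comp, Function.comp_apply,
        LinearMap.mulLeft_apply, AlgHom.toLinearMap_apply, map_mul, map_one, mul_one] at h2
      simp only [mul_assoc] at h2 ⊢
      exact h2
    have hval : Function.Injective (c.coinv.val.toLinearMap) := Subtype.val_injective
    have hflat : Function.Injective ((c.coinv.val.toLinearMap).rTensor H) :=
      Module.Flat.rTensor_preserves_injective_linearMap _ hval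
    have hE8' : ∀ z : ↥c.coinv ⊗[k] H,
        Ψ (c.δ (θ z)) = (c.coinv.val.toLinearMap).rTensor H z := by
      intro z
      have hcmp : Ψ ∘ₗ c.δ.toLinearMap ∘ₗ θ = (c.coinv.val.toLinearMap).rTensor H := by
        apply TensorProduct.ext'
        intro b h
        simpa using E8 b h
      simpa using DFunLike.congr_fun hcmp z
    constructor
    · -- injective
      intro z w hzw
      apply hflat
      rw [← hE8' z, ← hE8' w, hzw]
    · -- surjective
      intro a
      obtain ⟨F, hF⟩ := TensorProduct.exists_finset (R := k) (c.δ a)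
      set t := fun x : A × H => ℛ k x.2 with htdef
      have hΦa : Ψ (c.δ a) = ∑ x ∈ F, ∑ p ∈ (t x).index,
          (x.1 * j (antipode (R := k) ((t x).left p))) ⊗ₜ[k] (t x).right p := by
        rw [hF, map_sum]
        exact Finset.sum_congr rfl fun x _ => hΨtm _ _ (t x)
      have hS2 : θA (Ψ (c.δ a)) = a := by
        rw [hΦa, map_sum]
        have h1 : ∀ x ∈ F, θA (∑ p ∈ (t x).index,
            (x.1 * j (antipode (R := k) ((t x).left p))) ⊗ₜ[k] (t x).right p)
            = counit (R := k) x.2 • x.1 := by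
          intro x _
          rw [map_sum]
          simp only [hθA, LinearMap.coe_comp, Function.comp_apply, LinearMap.lTensor_tmul,
            LinearMap.mul'_apply, AlgHom.toLinearMap_apply]
          have h2 : ∀ p ∈ (t x).index,
              x.1 * j (antipode (R := k) ((t x).left p)) * j ((t x).right p)
              = x.1 * j (antipode (R := k) ((t x).left p) * (t x).right p) := by
            intro p _
            rw [map_mul, mul_assoc]
          rw [Finset.sum_congr rfl h2, ← Finset.mul_sum, ← map_sum,
            sum_antipode_mul_eq_smul (t x), map_smul, map_one, mul_smul_comm, mul_one]
        rw [Finset.sum_congr rfl h1, counit_delta c hF]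
      set ρ := fun (x : A × H) (p : H × H) => ℛ k ((t x).right p) with hρdef
      set w' := fun (x : A × H) (p : (t x).ι) (q : H × H) => ℛ k ((ρ x p).left q)
        with hw'def
      set w := fun (x : A × H) (p : H × H) => ℛ k ((t x).left p) with hwdef
      set inner : H ⊗[k] H →ₗ[k] A ⊗[k] H :=
        (TensorProduct.map (j.toLinearMap ∘ₗ antipode (R := k)) (antipode (R := k))) ∘ₗ
          (TensorProduct.comm k H H).toLinearMap with hinner
      set Ψ₂ : H →ₗ[k] (A ⊗[k] H) ⊗[k] H :=
        inner.rTensor H ∘ₗ (comul (R := k) (A := H)).rTensor H ∘ₗ comul (R := k) with hΨ₂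
      set L : (A ⊗[k] H) ⊗[k] H →ₗ[k] (A ⊗[k] H) ⊗[k] H :=
        (LinearMap.mul' k (A ⊗[k] H)).rTensor H ∘ₗ
          (TensorProduct.assoc k (A ⊗[k] H) (A ⊗[k] H) H).symm.toLinearMap ∘ₗ
          LinearMap.lTensor (A ⊗[k] H) Ψ₂ with hL
      have hΨ₂gen : ∀ (v : H) (T : Coalgebra.Repr k v (H × H))
            (W : ∀ i, Coalgebra.Repr k (T.left i) (H × H)),
          Ψ₂ v = ∑ i ∈ T.index, ∑ m ∈ (W i).index,
            (j (antipode (R := k) ((W i).right m)) ⊗ₜ[k] antipode (R := k) ((W i).left m))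
              ⊗ₜ[k] T.right i := by
        intro v T W
        simp only [hΨ₂, LinearMap.coe_comp, Function.comp_apply]
        rw [← T.eq]
        simp only [map_sum, LinearMap.rTensor_tmul]
        refine Finset.sum_congr rfl fun i _ => ?_
        rw [← (W i).eq]
        simp only [map_sum, TensorProduct.sum_tmul, LinearMap.rTensor_tmul, hinner,
          LinearMap.coe_comp, Function.comp_apply, LinearEquiv.coe_coe,
          TensorProduct.comm_tmul, TensorProduct.map_tmul, AlgHom.toLinearMap_apply]
      have hLtm : ∀ (u : A ⊗[k] H) (v : H), L (u ⊗ₜ[k] v)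
          = ((LinearMap.mul' k (A ⊗[k] H)).rTensor H)
              ((TensorProduct.assoc k (A ⊗[k] H) (A ⊗[k] H) H).symm (u ⊗ₜ[k] Ψ₂ v)) := by
        intro u v
        simp [hL]
      have step1 : (c.δ.toLinearMap).rTensor H (Ψ (c.δ a))
          = L (∑ x ∈ F, c.δ x.1 ⊗ₜ[k] x.2) := by
        rw [hΦa, map_sum, map_sum]
        refine Finset.sum_congr rfl fun x _ => ?_
        rw [map_sum]
        have lhs : ∀ p ∈ (t x).index,
            (c.δ.toLinearMap).rTensor H
              ((x.1 * j (antipode (R := k) ((t x).left p))) ⊗ₜ[k] (t x).right p)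
            = ∑ m ∈ (w x p).index,
                (c.δ x.1 * (j (antipode (R := k) ((w x p).right m)) ⊗ₜ[k]
                  antipode (R := k) ((w x p).left m))) ⊗ₜ[k] (t x).right p := by
          intro p _
          rw [LinearMap.rTensor_tmul, AlgHom.toLinearMap_apply, map_mul,
            delta_jS c j hj (w x p), Finset.mul_sum, TensorProduct.sum_tmul]
        rw [Finset.sum_congr rfl lhs, hLtm, hΨ₂gen x.2 (t x) (w x)]
        simp only [TensorProduct.tmul_sum, map_sum, TensorProduct.assoc_symm_tmul,
          LinearMap.rTensor_tmul, LinearMap.mul'_apply]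
      have step3 : L (∑ x ∈ F, ∑ p ∈ (t x).index,
            (x.1 ⊗ₜ[k] (t x).left p) ⊗ₜ[k] (t x).right p)
          = ((TensorProduct.mk k A H).flip (1 : H)).rTensor H (Ψ (c.δ a)) := by
        rw [map_sum]
        conv_rhs => rw [hΦa]
        rw [map_sum]
        refine Finset.sum_congr rfl fun x _ => ?_
        rw [map_sum, map_sum]
        have lhs : ∀ p ∈ (t x).index,
            L ((x.1 ⊗ₜ[k] (t x).left p) ⊗ₜ[k] (t x).right p)
            = ∑ q ∈ (ρ x p).index, ∑ m ∈ (w' x p q).index,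
                ((x.1 * j (antipode (R := k) ((w' x p q).right m))) ⊗ₜ[k]
                  ((t x).left p * antipode (R := k) ((w' x p q).left m)))
                  ⊗ₜ[k] (ρ x p).right q := by
          intro p _
          rw [hLtm, hΨ₂gen ((t x).right p) (ρ x p) (w' x p)]
          simp only [TensorProduct.tmul_sum, map_sum, TensorProduct.assoc_symm_tmul,
            LinearMap.rTensor_tmul, LinearMap.mul'_apply,
            Algebra.TensorProduct.tmul_mul_tmul]
        rw [Finset.sum_congr rfl lhs]
        have base := contr6 (t x) (ρ x) (w' x)
        have h1 := congrArg (⇑((TensorProduct.assoc k A H H).symm.toLinearMap ∘ₗ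
          ((LinearMap.mulLeft k x.1 ∘ₗ j.toLinearMap).rTensor (H ⊗[k] H)))) base
        simp only [map_sum, LinearMap.coe_comp, Function.comp_apply, LinearMap.rTensor_tmul,
          LinearMap.mulLeft_apply, AlgHom.toLinearMap_apply, LinearEquiv.coe_coe,
          TensorProduct.assoc_symm_tmul] at h1
        rw [h1]
        refine Finset.sum_congr rfl fun p _ => ?_
        simp [LinearMap.flip_apply, TensorProduct.mk_apply]
      have hC1 : (c.δ.toLinearMap).rTensor H (Ψ (c.δ a))
          = ((TensorProduct.mk k A H).flip (1 : H)).rTensor H (Ψ (c.δ a)) := by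
        rw [step1, coassoc_delta c hF t, step3]
      set bH := Module.Basis.ofVectorSpace k H with hbH
      set π : Module.Basis.ofVectorSpaceIndex k H → (A ⊗[k] H →ₗ[k] A) := fun β =>
        (TensorProduct.rid k A).toLinearMap ∘ₗ LinearMap.lTensor A (bH.coord β) with hπ
      have hπtm : ∀ β (u : A) (v : H), π β (u ⊗ₜ[k] v) = bH.repr v β • u := by
        intro β u v
        simp [hπ, Module.Basis.coord_apply, TensorProduct.rid_tmul]
      have hmem : ∀ β, π β (Ψ (c.δ a)) ∈ c.coinv := by
        intro β
        have hGam : ∀ (f : A →ₗ[k] A ⊗[k] H) (z : A ⊗[k] H),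
            ((TensorProduct.rid k (A ⊗[k] H)).toLinearMap ∘ₗ
              LinearMap.lTensor (A ⊗[k] H) (bH.coord β)) (f.rTensor H z) = f (π β z) := by
          intro f z
          have hcmp : ((TensorProduct.rid k (A ⊗[k] H)).toLinearMap ∘ₗ
              LinearMap.lTensor (A ⊗[k] H) (bH.coord β)) ∘ₗ f.rTensor H = f ∘ₗ π β := by
            apply TensorProduct.ext'
            intro u v
            simp [hπ, Module.Basis.coord_apply, TensorProduct.rid_tmul, map_smul]
          exact DFunLike.congr_fun hcmp z
        show c.δ (π β (Ψ (c.δ a))) = π β (Ψ (c.δ a)) ⊗ₜ[k] 1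
        have e1 := hGam c.δ.toLinearMap (Ψ (c.δ a))
        have e2 := hGam ((TensorProduct.mk k A H).flip (1 : H)) (Ψ (c.δ a))
        rw [hC1] at e1
        have e3 := e1.symm.trans e2
        simpa [LinearMap.flip_apply, TensorProduct.mk_apply] using e3
      obtain ⟨G, hG⟩ := TensorProduct.exists_finset (R := k) (Ψ (c.δ a))
      set Sfin := G.biUnion (fun u => (bH.repr u.2).support) with hSfin
      have hπz : ∀ β, π β (Ψ (c.δ a)) = ∑ u ∈ G, bH.repr u.2 β • u.1 := by
        intro β
        rw [hG, map_sum]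
        exact Finset.sum_congr rfl fun u _ => hπtm β u.1 u.2
      have hdecomp : Ψ (c.δ a) = ∑ β ∈ Sfin, π β (Ψ (c.δ a)) ⊗ₜ[k] bH β := by
        calc Ψ (c.δ a) = ∑ u ∈ G, u.1 ⊗ₜ[k] u.2 := hG
          _ = ∑ u ∈ G, ∑ β ∈ Sfin, (bH.repr u.2 β • u.1) ⊗ₜ[k] bH β := by
              refine Finset.sum_congr rfl fun u hu => ?_
              have hsub : (bH.repr u.2).support ⊆ Sfin := by
                rw [hSfin]
                exact Finset.subset_biUnion_of_mem (fun u => (bH.repr u.2).support) hu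
              have hrepr : ∑ β ∈ Sfin, bH.repr u.2 β • bH β = u.2 := by
                have h0 := bH.linearCombination_repr u.2
                rw [Finsupp.linearCombination_apply, Finsupp.sum] at h0
                calc ∑ β ∈ Sfin, bH.repr u.2 β • bH β
                    = ∑ β ∈ (bH.repr u.2).support, bH.repr u.2 β • bH β :=
                      (Finset.sum_subset hsub (fun β _ hβ => by
                        rw [Finsupp.notMem_support_iff.mp hβ, zero_smul])).symm
                  _ = u.2 := h0
              calc u.1 ⊗ₜ[k] u.2
                  = u.1 ⊗ₜ[k] (∑ β ∈ Sfin, bH.repr u.2 β • bH β) := by rw [hrepr]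
                _ = ∑ β ∈ Sfin, (bH.repr u.2 β • u.1) ⊗ₜ[k] bH β := by
                    rw [TensorProduct.tmul_sum]
                    exact Finset.sum_congr rfl fun β _ => by
                      rw [TensorProduct.tmul_smul, TensorProduct.smul_tmul']
          _ = ∑ β ∈ Sfin, ∑ u ∈ G, (bH.repr u.2 β • u.1) ⊗ₜ[k] bH β := Finset.sum_comm
          _ = ∑ β ∈ Sfin, π β (Ψ (c.δ a)) ⊗ₜ[k] bH β := by
              refine Finset.sum_congr rfl fun β _ => ?_
              rw [hπz β, TensorProduct.sum_tmul]
      refine ⟨∑ β ∈ Sfin, (⟨π β (Ψ (c.δ a)), hmem β⟩ : ↥c.coinv) ⊗ₜ[k] bH β, ?_⟩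
      have hθx : θ (∑ β ∈ Sfin, (⟨π β (Ψ (c.δ a)), hmem β⟩ : ↥c.coinv) ⊗ₜ[k] bH β)
          = θA (∑ β ∈ Sfin, π β (Ψ (c.δ a)) ⊗ₜ[k] bH β) := by
        rw [map_sum, map_sum]
        refine Finset.sum_congr rfl fun β _ => ?_
        simp [hθ, hθA]
      rw [hθx, ← hdecomp, hS2]
  · -- (7) smash product formula
    intro b b' h h' ι r
    set s := fun i => ℛ k (r.left i) with hsdef
    have hrhs : ∀ i ∈ r.index,
        (b : A) * adAction k j (r.left i ⊗ₜ[k] (b' : A)) * j (r.right i * h')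
        = ∑ p ∈ (s i).index,
            (b : A) * (j ((s i).left p) * ((b' : A) *
              j (HopfAlgebra.antipode (R := k) ((s i).right p)))) * (j (r.right i) * j h') := by
      intro i _
      rw [adAction_eq j _ (s i), map_mul, Finset.mul_sum, Finset.sum_mul]
    rw [Finset.sum_congr rfl hrhs]
    have base := contr1 r s
    have h1 := congrArg (⇑(LinearMap.mul' k A ∘ₗ TensorProduct.map
      (LinearMap.mulLeft k (b : A) ∘ₗ LinearMap.mulRight k (b' : A) ∘ₗ j.toLinearMap)
      (LinearMap.mulRight k (j h') ∘ₗ j.toLinearMap))) base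
    simp only [map_sum, LinearMap.coe_comp, Function.comp_apply, TensorProduct.map_tmul,
      LinearMap.mul'_apply, LinearMap.mulLeft_apply, LinearMap.mulRight_apply,
      AlgHom.toLinearMap_apply, map_mul, map_one, one_mul] at h1
    simp only [mul_assoc] at h1 ⊢
    exact h1.symm
  · -- (8) comodule map property
    apply TensorProduct.ext'
    intro b h
    have hc : comul (R := k) h
        = ∑ i ∈ (ℛ k h).index, (ℛ k h).left i ⊗ₜ[k] (ℛ k h).right i := (ℛ k h).eq.symm
    simp only [LinearMap.coe_comp, Function.comp_apply, LinearMap.lTensor_tmul, hc,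
      TensorProduct.tmul_sum, map_sum, LinearEquiv.coe_coe, TensorProduct.assoc_symm_tmul,
      TensorProduct.map_tmul, LinearMap.mul'_apply, LinearMap.id_coe, id_eq,
      AlgHom.toLinearMap_apply, Subalgebra.coe_val]
    rw [map_mul, hbδ (b : A) b.2, delta_j c j hj (ℛ k h), Finset.mul_sum]
    refine Finset.sum_congr rfl fun i _ => ?_
    rw [Algebra.TensorProduct.tmul_mul_tmul, one_mul]
end

section
/- In the localization O_q(M_n)[a_{11}^{-1}] of the quantum matrix algebra, the following commutation relations hold for all α, β, γ ∈ {2,…,n}: (i) a_{11}^{±1} D^{1β}_{1α} = D^{1β}_{1α} a_{11}^{±1}; (ii) for γ > β: a_{1γ} (a_{11}^{-1}D^{1β}_{1α}) = (a_{11}^{-1}D^{1β}_{1α}) a_{1γ}; (iii) for γ = β: a_{1β} (a_{11}^{-1}D^{1β}_{1α}) = q⁻¹ (a_{11}^{-1}D^{1β}_{1α}) a_{1β}; (iv) for γ < β: a_{1γ} (a_{11}^{-1}D^{1β}_{1α}) = (a_{11}^{-1}D^{1β}_{1α}) a_{1γ} + (q⁻¹−q) a_{1β} (a_{11}^{-1}D^{1γ}_{1α}).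 -/
/-!
STATEMENT 13 (commutation relations used in Lemma 5.5 of the paper).  In the localization
`O_q(M_n)[a_{11}⁻¹]` of the quantum matrix algebra, for all `α, β, γ ∈ {2,…,n}`:
(i) `a_{11}^{±1} D^{1β}_{1α} = D^{1β}_{1α} a_{11}^{±1}`;
(ii) for `γ > β`: `a_{1γ} (a_{11}⁻¹D^{1β}_{1α}) = (a_{11}⁻¹D^{1β}_{1α}) a_{1γ}`;
(iii) for `γ = β`: `a_{1β} (a_{11}⁻¹D^{1β}_{1α}) = q⁻¹ (a_{11}⁻¹D^{1β}_{1α}) a_{1β}`;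
(iv) for `γ < β`:
`a_{1γ} (a_{11}⁻¹D^{1β}_{1α}) = (a_{11}⁻¹D^{1β}_{1α}) a_{1γ} + (q⁻¹−q) a_{1β} (a_{11}⁻¹D^{1γ}_{1α})`.

ENCODING.  Indices are `0`-based; `D^{1β}_{1α} = a_{11}a_{αβ} − q⁻¹a_{1β}a_{α1}` is
`Dm 0 α 0 β`; `O_q(M_n)[a_{11}⁻¹]` is the Ore localization at `{a_{11}^k}` (Ore set as a
hypothesis) and `a_{11}⁻¹ = 1 /ₒ a_{11}`.
-/

open TensorProduct

namespace QM

variable (R : Type) [CommRing R] (qv : Rˣ)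

/-- The free algebra on the `n × n` matrix generators `x_{ij}`. -/
abbrev FA (n : ℕ) : Type := FreeAlgebra R (Fin n × Fin n)

/-- The generator `x_{ij}`. -/
def X {n : ℕ} (i j : Fin n) : FA R n := FreeAlgebra.ι R (i, j)

/-- The Manin relations for quantum `n × n` matrices (deformation parameter `q = qv`):
`a_{ij}a_{kj} = q⁻¹a_{kj}a_{ij}` for `i<k`; `a_{ij}a_{il} = q⁻¹a_{il}a_{ij}` for `j<l`;
`a_{ij}a_{kl} = a_{kl}a_{ij}` if `i<k, j>l` (equivalently `i>k, j<l`);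
`a_{ij}a_{kl} − a_{kl}a_{ij} = (q⁻¹−q)a_{il}a_{kj}` if `i<k, j<l`. -/
inductive maninRel (n : ℕ) : FA R n → FA R n → Prop
  | col (i j k : Fin n) : i < k →
      maninRel n (X R i j * X R k j) (((qv⁻¹ : Rˣ) : R) • (X R k j * X R i j))
  | row (i j l : Fin n) : j < l →
      maninRel n (X R i j * X R i l) (((qv⁻¹ : Rˣ) : R) • (X R i l * X R i j))
  | comm (i j k l : Fin n) : i < k → l < j →
      maninRel n (X R i j * X R k l) (X R k l * X R i j)
  | cross (i j k l : Fin n) : i < k → j < l →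
      maninRel n (X R i j * X R k l)
        (X R k l * X R i j + (((qv⁻¹ : Rˣ) : R) - (qv : R)) • (X R i l * X R k j))

/-- The algebra `O_q(M_n)` of quantum matrices. -/
abbrev OqM (n : ℕ) : Type := RingQuot (maninRel R qv n)

/-- The matrix generator `a_{ij} ∈ O_q(M_n)`. -/
def a {n : ℕ} (i j : Fin n) : OqM R qv n :=
  RingQuot.mkAlgHom R (maninRel R qv n) (X R i j)

/-- The length (number of inversions) of a permutation of a finite linear order. -/
def len {α : Type*} [LinearOrder α] [Fintype α] [DecidableEq α] (σ : Equiv.Perm α) : ℕ :=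
  (Finset.univ.filter (fun p : α × α => p.1 < p.2 ∧ σ p.2 < σ p.1)).card

/-- `(-q)^{-ℓ(σ)} = (-(q⁻¹))^{ℓ(σ)}`. -/
def mq {α : Type*} [LinearOrder α] [Fintype α] [DecidableEq α] (σ : Equiv.Perm α) : R :=
  (-((qv⁻¹ : Rˣ) : R)) ^ (len σ)

/-- The quantum determinant `det_q = Σ_σ (−q)^{−ℓ(σ)} a_{1σ(1)}⋯a_{nσ(n)}`. -/
noncomputable def detq (n : ℕ) : OqM R qv n :=
  ∑ σ : Equiv.Perm (Fin n),
    mq R qv σ • ((List.finRange n).map (fun i => a R qv i (σ i))).prod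

/-- The relation imposing `det_q = 1`. -/
def detRel (n : ℕ) : OqM R qv n → OqM R qv n → Prop :=
  fun x y => x = detq R qv n ∧ y = 1

/-- The quantum special linear group `O_q(SL_n) = O_q(M_n)/(det_q − 1)`. -/
abbrev OqSL (n : ℕ) : Type := RingQuot (detRel R qv n)

/-- The generator `a_{ij} ∈ O_q(SL_n)`. -/
noncomputable def asl {n : ℕ} (i j : Fin n) : OqSL R qv n :=
  RingQuot.mkAlgHom R (detRel R qv n) (a R qv i j)

/-- The `2×2` quantum minor `D^{kl}_{ij} = a_{ik}a_{jl} − q⁻¹a_{il}a_{jk}`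
(rows `i<j`, columns `k<l`), in `O_q(M_n)`. -/
def Dm {n : ℕ} (i j k l : Fin n) : OqM R qv n :=
  a R qv i k * a R qv j l - ((qv⁻¹ : Rˣ) : R) • (a R qv i l * a R qv j k)

end QM

open QM OreLocalization

/-- `ℂ_q = ℂ[q,q⁻¹]`, the ring of complex Laurent polynomials. -/
noncomputable def Rq : Type := LaurentPolynomial ℂ

noncomputable instance : CommRing Rq := inferInstanceAs (CommRing (LaurentPolynomial ℂ))

/-- The unit `q ∈ ℂ[q,q⁻¹]`. -/
noncomputable def qUnit : Rqˣ where
  val := LaurentPolynomial.T 1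
  inv := LaurentPolynomial.T (-1)
  val_inv := by
    have h : (LaurentPolynomial.T 1 : LaurentPolynomial ℂ) * LaurentPolynomial.T (-1) = 1 := by
      rw [← LaurentPolynomial.T_add]; norm_num
    exact h
  inv_val := by
    have h : (LaurentPolynomial.T (-1) : LaurentPolynomial ℂ) * LaurentPolynomial.T 1 = 1 := by
      rw [← LaurentPolynomial.T_add]; norm_num
    exact h

namespace QM
variable {R : Type} [CommRing R] {qv : Rˣ} {n : ℕ}

lemma rel_col {i k : Fin n} (j : Fin n) (h : i < k) :
    a R qv i j * a R qv k j = ((qv⁻¹ : Rˣ) : R) • (a R qv k j * a R qv i j) := by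
  have h0 := RingQuot.mkAlgHom_rel R (maninRel.col (R := R) (qv := qv) i j k h)
  simpa [a, map_mul, map_smul] using h0

lemma rel_row {j l : Fin n} (i : Fin n) (h : j < l) :
    a R qv i j * a R qv i l = ((qv⁻¹ : Rˣ) : R) • (a R qv i l * a R qv i j) := by
  have h0 := RingQuot.mkAlgHom_rel R (maninRel.row (R := R) (qv := qv) i j l h)
  simpa [a, map_mul, map_smul] using h0

lemma rel_comm {i j k l : Fin n} (h1 : i < k) (h2 : l < j) :
    a R qv i j * a R qv k l = a R qv k l * a R qv i j := by
  have h0 := RingQuot.mkAlgHom_rel R (maninRel.comm (R := R) (qv := qv) i j k l h1 h2)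
  simpa [a, map_mul, map_smul] using h0

lemma rel_cross {i j k l : Fin n} (h1 : i < k) (h2 : j < l) :
    a R qv i j * a R qv k l = a R qv k l * a R qv i j
      + (((qv⁻¹ : Rˣ) : R) - (qv : R)) • (a R qv i l * a R qv k j) := by
  have h0 := RingQuot.mkAlgHom_rel R (maninRel.cross (R := R) (qv := qv) i j k l h1 h2)
  simpa [a, map_mul, map_smul] using h0

end QM

namespace QM
section Aux
variable {R : Type} [CommRing R] {qv : Rˣ} {n : ℕ}

lemma mul_rw {A : Type*} [Semiring A] {a b c : A} (h : a * b = c) (x : A) :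
    a * (b * x) = c * x := by rw [← mul_assoc, h]

lemma sm1 {A : Type*} [AddCommMonoid A] [Module R A] (x : A) :
    ((qv⁻¹ : Rˣ) : R) • ((qv : R) • x) = x := by
  rw [smul_smul, ← Units.val_mul, inv_mul_cancel, Units.val_one, one_smul]

lemma sm2 {A : Type*} [AddCommMonoid A] [Module R A] (x : A) :
    ((qv : R)) • (((qv⁻¹ : Rˣ) : R) • x) = x := by
  rw [smul_smul, ← Units.val_mul, mul_inv_cancel, Units.val_one, one_smul]

lemma swap_qr {x y : OqM R qv n} (h : x * y = ((qv⁻¹ : Rˣ) : R) • (y * x)) :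
    y * x = (qv : R) • (x * y) := by rw [h, sm2]

variable [NeZero n] {α β γ : Fin n}

lemma L3 (hα : 0 < α) (hβ : 0 < β) :
    a R qv 0 0 * Dm R qv 0 α 0 β = Dm R qv 0 α 0 β * a R qv 0 0 := by
  have hb := rel_cross (R := R) (qv := qv) (i := 0) (j := 0) (k := α) (l := β) hα hβ
  have hbu := eq_sub_of_add_eq hb.symm
  have hcu := swap_qr (rel_row (R := R) (qv := qv) (j := 0) (l := β) 0 hβ)
  have hdu := swap_qr (rel_col (R := R) (qv := qv) (i := 0) (k := α) 0 hα)
  simp only [Dm, mul_sub, sub_mul, mul_add, add_mul, mul_smul_comm, smul_mul_assoc,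
    smul_sub, smul_add, sub_smul, mul_assoc, sm1, sm2, hbu, hcu, hdu,
    mul_rw hbu, mul_rw hcu, mul_rw hdu]
  module

lemma L5 (hα : 0 < α) (hβ : 0 < β) :
    a R qv 0 β * Dm R qv 0 α 0 β = Dm R qv 0 α 0 β * a R qv 0 β := by
  have hcu := swap_qr (rel_row (R := R) (qv := qv) (j := 0) (l := β) 0 hβ)
  have hdu := swap_qr (rel_col (R := R) (qv := qv) (i := 0) (k := α) 0 hα)
  have hdc := (rel_comm (R := R) (qv := qv) (i := 0) (j := β) (k := α) (l := 0) hα hβ).symm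
  have hbc := swap_qr (rel_col (R := R) (qv := qv) (i := 0) (k := α) β hα)
  simp only [Dm, mul_sub, sub_mul, mul_add, add_mul, mul_smul_comm, smul_mul_assoc,
    smul_sub, smul_add, sub_smul, mul_assoc, sm1, sm2, hcu, hdu, hdc, hbc,
    mul_rw hcu, mul_rw hdu, mul_rw hdc, mul_rw hbc]

lemma L4 (hα : 0 < α) (hβ : 0 < β) (hγ : β < γ) :
    a R qv 0 γ * Dm R qv 0 α 0 β = (qv : R) • (Dm R qv 0 α 0 β * a R qv 0 γ) := by
  have hγ0 : (0 : Fin n) < γ := lt_trans hβ hγ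
  have heu := swap_qr (rel_row (R := R) (qv := qv) (j := 0) (l := γ) 0 hγ0)
  have hbe := (rel_comm (R := R) (qv := qv) (i := 0) (j := γ) (k := α) (l := β) hα hγ).symm
  have hec := swap_qr (rel_row (R := R) (qv := qv) (j := β) (l := γ) 0 hγ)
  have hde := (rel_comm (R := R) (qv := qv) (i := 0) (j := γ) (k := α) (l := 0) hα hγ0).symm
  simp only [Dm, mul_sub, sub_mul, mul_add, add_mul, mul_smul_comm, smul_mul_assoc,
    smul_sub, smul_add, sub_smul, mul_assoc, sm1, sm2, heu, hbe, hec, hde,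
    mul_rw heu, mul_rw hbe, mul_rw hec, mul_rw hde]

lemma L6 (hα : 0 < α) (hγ0 : 0 < γ) (hγβ : γ < β) :
    a R qv 0 γ * Dm R qv 0 α 0 β
      = (qv : R) • (Dm R qv 0 α 0 β * a R qv 0 γ)
        + (((qv⁻¹ : Rˣ) : R) - (qv : R)) • (a R qv 0 β * Dm R qv 0 α 0 γ) := by
  have hβ : (0 : Fin n) < β := lt_trans hγ0 hγβ
  have heu := swap_qr (rel_row (R := R) (qv := qv) (j := 0) (l := γ) 0 hγ0)
  have hcu := swap_qr (rel_row (R := R) (qv := qv) (j := 0) (l := β) 0 hβ)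
  have hbe := eq_sub_of_add_eq
    (rel_cross (R := R) (qv := qv) (i := 0) (j := γ) (k := α) (l := β) hα hγβ).symm
  have hec := rel_row (R := R) (qv := qv) (j := γ) (l := β) 0 hγβ
  have hde := (rel_comm (R := R) (qv := qv) (i := 0) (j := γ) (k := α) (l := 0) hα hγ0).symm
  simp only [Dm, mul_sub, sub_mul, mul_add, add_mul, mul_smul_comm, smul_mul_assoc,
    smul_sub, smul_add, sub_smul, mul_assoc, sm1, sm2, heu, hcu, hbe, hec, hde,
    mul_rw heu, mul_rw hcu, mul_rw hbe, mul_rw hec, mul_rw hde]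
  match_scalars
  all_goals try ring1
  all_goals linear_combination Units.mul_inv qv

end Aux
end QM

/-- **Statement 13.**  Commutation relations between the `a_{1γ}` and the elements
`a_{11}⁻¹D^{1β}_{1α}` in `O_q(M_n)[a_{11}⁻¹]`. -/
theorem statement13 (n : ℕ) [NeZero n]
    [oreA : OreSet (Submonoid.powers (a Rq qUnit (0 : Fin n) 0))]
    (α β γ : Fin n) (hα : α ≠ 0) (hβ : β ≠ 0) (hγ : γ ≠ 0) :
    letI ι : OqM Rq qUnit n →+*
        OreLocalization (Submonoid.powers (a Rq qUnit (0 : Fin n) 0)) (OqM Rq qUnit n) :=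
      numeratorRingHom
    letI inv : OreLocalization (Submonoid.powers (a Rq qUnit (0 : Fin n) 0))
        (OqM Rq qUnit n) :=
      (1 : OqM Rq qUnit n) /ₒ ⟨a Rq qUnit 0 0, Submonoid.mem_powers _⟩
    -- (i) `a_{11}^{±1}` commutes with `D^{1β}_{1α}`:
    (ι (a Rq qUnit 0 0) * ι (Dm Rq qUnit 0 α 0 β)
        = ι (Dm Rq qUnit 0 α 0 β) * ι (a Rq qUnit 0 0)) ∧
    (inv * ι (Dm Rq qUnit 0 α 0 β) = ι (Dm Rq qUnit 0 α 0 β) * inv) ∧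
    -- (ii) `γ > β`:
    (β < γ →
      ι (a Rq qUnit 0 γ) * (inv * ι (Dm Rq qUnit 0 α 0 β))
        = (inv * ι (Dm Rq qUnit 0 α 0 β)) * ι (a Rq qUnit 0 γ)) ∧
    -- (iii) `γ = β`:
    (ι (a Rq qUnit 0 β) * (inv * ι (Dm Rq qUnit 0 α 0 β))
        = ((qUnit⁻¹ : Rqˣ) : Rq) •
            ((inv * ι (Dm Rq qUnit 0 α 0 β)) * ι (a Rq qUnit 0 β))) ∧
    -- (iv) `γ < β`:
    (γ < β →
      ι (a Rq qUnit 0 γ) * (inv * ι (Dm Rq qUnit 0 α 0 β))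
        = (inv * ι (Dm Rq qUnit 0 α 0 β)) * ι (a Rq qUnit 0 γ)
          + (((qUnit⁻¹ : Rqˣ) : Rq) - (qUnit : Rq)) •
              (ι (a Rq qUnit 0 β) * (inv * ι (Dm Rq qUnit 0 α 0 γ)))) := by
  
  set ι : OqM Rq qUnit n →+*
      OreLocalization (Submonoid.powers (a Rq qUnit (0 : Fin n) 0)) (OqM Rq qUnit n) :=
    numeratorRingHom with hιdef
  set v : OreLocalization (Submonoid.powers (a Rq qUnit (0 : Fin n) 0)) (OqM Rq qUnit n) :=
    (1 : OqM Rq qUnit n) /ₒ ⟨a Rq qUnit 0 0, Submonoid.mem_powers _⟩ with hvdef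
  have hα' : (0 : Fin n) < α := lt_of_le_of_ne (Fin.zero_le α) (Ne.symm hα)
  have hβ' : (0 : Fin n) < β := lt_of_le_of_ne (Fin.zero_le β) (Ne.symm hβ)
  have hγ' : (0 : Fin n) < γ := lt_of_le_of_ne (Fin.zero_le γ) (Ne.symm hγ)
  have sm1' : ∀ x : OreLocalization (Submonoid.powers (a Rq qUnit (0 : Fin n) 0))
      (OqM Rq qUnit n), ((qUnit⁻¹ : Rqˣ) : Rq) • ((qUnit : Rq) • x) = x := by
    intro x
    rw [smul_smul, ← Units.val_mul, inv_mul_cancel, Units.val_one, one_smul]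
  have sm2' : ∀ x : OreLocalization (Submonoid.powers (a Rq qUnit (0 : Fin n) 0))
      (OqM Rq qUnit n), ((qUnit : Rq)) • (((qUnit⁻¹ : Rqˣ) : Rq) • x) = x := by
    intro x
    rw [smul_smul, ← Units.val_mul, mul_inv_cancel, Units.val_one, one_smul]
  have hlin : ∀ (r : Rq) (x : OqM Rq qUnit n), ι (r • x) = r • ι x := by
    intro r x
    show ((r • x) /ₒ (1 : Submonoid.powers (a Rq qUnit (0 : Fin n) 0)))
      = r • (x /ₒ (1 : Submonoid.powers (a Rq qUnit (0 : Fin n) 0)))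
    rw [← smul_one_smul (M := OqM Rq qUnit n) r
      (x /ₒ (1 : Submonoid.powers (a Rq qUnit (0 : Fin n) 0))),
      ← OreLocalization.oreDiv_one_smul, OreLocalization.smul_div_one,
      smul_eq_mul, smul_mul_assoc, one_mul]
  have huv : ι (a Rq qUnit 0 0) * v = 1 := by
    show (a Rq qUnit 0 0 /ₒ (1 : Submonoid.powers (a Rq qUnit (0 : Fin n) 0)))
        * (1 /ₒ ⟨a Rq qUnit 0 0, Submonoid.mem_powers _⟩) = 1
    simpa using OreLocalization.mul_inv
      (⟨a Rq qUnit 0 0, Submonoid.mem_powers _⟩ : Submonoid.powers (a Rq qUnit (0 : Fin n) 0)) 1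
  have hvu : v * ι (a Rq qUnit 0 0) = 1 := by
    show (1 /ₒ ⟨a Rq qUnit 0 0, Submonoid.mem_powers _⟩)
        * (a Rq qUnit 0 0 /ₒ (1 : Submonoid.powers (a Rq qUnit (0 : Fin n) 0))) = 1
    simpa using OreLocalization.mul_inv 1
      (⟨a Rq qUnit 0 0, Submonoid.mem_powers _⟩ : Submonoid.powers (a Rq qUnit (0 : Fin n) 0))
  have vA : ∀ y, v * (ι (a Rq qUnit 0 0) * y) = y := fun y => by
    rw [← mul_assoc, hvu, one_mul]
  -- transfer of q-commutation with a_{11} across the inverse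
  have key : ∀ x : OqM Rq qUnit n,
      x * a Rq qUnit 0 0 = (qUnit : Rq) • (a Rq qUnit 0 0 * x) →
      ι x * v = ((qUnit⁻¹ : Rqˣ) : Rq) • (v * ι x) := by
    intro x hx
    have h1 : v * (ι (x * a Rq qUnit 0 0)) * v
        = v * (ι ((qUnit : Rq) • (a Rq qUnit 0 0 * x))) * v := by rw [hx]
    rw [map_mul, hlin, map_mul] at h1
    simp only [mul_assoc, mul_smul_comm, smul_mul_assoc, huv, vA, mul_one] at h1
    rw [h1]
    exact (sm1' _).symm
  have hgv := key _ (swap_qr (rel_row (R := Rq) (qv := qUnit) (j := 0) (l := γ) 0 hγ'))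
  have hcv := key _ (swap_qr (rel_row (R := Rq) (qv := qUnit) (j := 0) (l := β) 0 hβ'))
  -- part 1
  have part1 : ι (a Rq qUnit 0 0) * ι (Dm Rq qUnit 0 α 0 β)
      = ι (Dm Rq qUnit 0 α 0 β) * ι (a Rq qUnit 0 0) := by
    rw [← map_mul, L3 hα' hβ', map_mul]
  -- part 2
  have part2 : v * ι (Dm Rq qUnit 0 α 0 β) = ι (Dm Rq qUnit 0 α 0 β) * v := by
    letI U : Units (OreLocalization (Submonoid.powers (a Rq qUnit (0 : Fin n) 0))
        (OqM Rq qUnit n)) := ⟨ι (a Rq qUnit 0 0), v, huv, hvu⟩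
    have hU : Commute (U : OreLocalization (Submonoid.powers (a Rq qUnit (0 : Fin n) 0))
        (OqM Rq qUnit n)) (ι (Dm Rq qUnit 0 α 0 β)) := part1
    exact hU.units_inv_left
  refine ⟨part1, part2, ?_, ?_, ?_⟩
  · intro hβγ
    have hgD : ι (a Rq qUnit 0 γ) * ι (Dm Rq qUnit 0 α 0 β)
        = (qUnit : Rq) • (ι (Dm Rq qUnit 0 α 0 β) * ι (a Rq qUnit 0 γ)) := by
      rw [← map_mul, L4 hα' hβ' hβγ, hlin, map_mul]
    rw [← mul_assoc, hgv, smul_mul_assoc, mul_assoc, hgD, mul_smul_comm, sm1' _, ← mul_assoc]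
  · have hcD : ι (a Rq qUnit 0 β) * ι (Dm Rq qUnit 0 α 0 β)
        = ι (Dm Rq qUnit 0 α 0 β) * ι (a Rq qUnit 0 β) := by
      rw [← map_mul, L5 hα' hβ', map_mul]
    rw [← mul_assoc, hcv, smul_mul_assoc, mul_assoc, hcD, ← mul_assoc]
  · intro hγβ
    have hgD : ι (a Rq qUnit 0 γ) * ι (Dm Rq qUnit 0 α 0 β)
        = (qUnit : Rq) • (ι (Dm Rq qUnit 0 α 0 β) * ι (a Rq qUnit 0 γ))
          + (((qUnit⁻¹ : Rqˣ) : Rq) - (qUnit : Rq)) •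
              (ι (a Rq qUnit 0 β) * ι (Dm Rq qUnit 0 α 0 γ)) := by
      rw [← map_mul, L6 hα' hγ' hγβ, map_add, hlin, hlin, map_mul, map_mul]
    simp only [mul_assoc, smul_mul_assoc, mul_smul_comm, smul_add, mul_add, add_mul,
      smul_sub, sub_smul, sm1', sm2', hgD, mul_rw hgv, mul_rw hcv]
    module
end
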